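/- arXiv:2212.07343 — 3 statements merged into one kernel-verified Lean document; each statement's English description precedes it below -/
import Mathlib

section
/- Let t ≥ 2 be an integer and let λ be an orthogonal or symplectic t-core whose Young diagram is contained in an nt × nt square (i.e., l(λ) ≤ nt and λ_1 ≤ nt). Then sgn(w_t(λ;nt)) · sgn(w_t(λ';nt)) = (−1)^{rk(λ)}. -/
open scoped BigOperators

noncomputable section

/-! ## The ring of symmetric functions and basic operators -/

/-- The ring of symmetric functions `Λ` (with coefficients in `ℚ`, so that the
half occurring in the definition of `sp_λ` is available), realised as the
polynomial ring in the algebraically independent complete homogeneous symmetric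
functions `h₁, h₂, h₃, …`; the variable `n : ℕ` stands for `h_{n+1}`. -/
abbrev SymF : Type := MvPolynomial ℕ ℚ

/-- The complete homogeneous symmetric function `h_r ∈ Λ`, with `h_0 = 1` and
`h_r = 0` for `r < 0`. -/
def hh (r : ℤ) : SymF :=
  if r < 0 then 0 else if r = 0 then 1 else MvPolynomial.X (r.toNat - 1)

/-- The algebra homomorphism `φ_t : Λ → Λ` determined by `φ_t h_r = h_{r/t}`
if `t ∣ r` and `φ_t h_r = 0` otherwise. -/
def phi (t : ℕ) : SymF →ₐ[ℚ] SymF :=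
  MvPolynomial.aeval fun n =>
    if t ∣ (n + 1) then hh (((n + 1) / t : ℕ) : ℤ) else 0

/-- The elementary symmetric function `e_r`, via the Jacobi–Trudi determinant
`e_r = s_{(1^r)} = det_{1 ≤ i,j ≤ r}(h_{1 - i + j})`. -/
def ee (r : ℕ) : SymF :=
  Matrix.det (Matrix.of fun i j : Fin r => hh (1 + (j : ℤ) - (i : ℤ)))

/-- The involution `ω : Λ → Λ`, determined by `ω h_r = e_r`. -/
def omegaSym : SymF →ₐ[ℚ] SymF :=
  MvPolynomial.aeval fun n => ee (n + 1)

/-- `(-1)^z` for an integer exponent `z`. -/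
def msign (z : ℤ) : ℤ := if Even z then 1 else -1

/-! ## Partitions -/

/-- A partition, encoded as a weakly decreasing, eventually zero function
`ℕ → ℕ` (0-indexed: `f i` is the part `λ_{i+1}`). -/
def IsPartition (f : ℕ → ℕ) : Prop :=
  Antitone f ∧ ∃ N, ∀ i, N ≤ i → f i = 0

/-- The length `l(λ)` (number of nonzero parts). -/
def plen (f : ℕ → ℕ) : ℕ := sInf {N | ∀ i, N ≤ i → f i = 0}

/-- Containment `μ ⊆ λ` of partitions. -/
def SubP (mu lam : ℕ → ℕ) : Prop := ∀ i, mu i ≤ lam i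

/-- The conjugate partition `λ'`. -/
def conjP (f : ℕ → ℕ) : ℕ → ℕ := fun j => Set.ncard {i | j < f i}

/-- The Frobenius rank `rk(λ)` (side length of the Durfee square). -/
def rk (f : ℕ → ℕ) : ℕ := Set.ncard {i | i < f i}

/-- The size `|λ|` of a partition. -/
def psize (f : ℕ → ℕ) : ℕ := ∑ i ∈ Finset.range (plen f), f i

/-- `λ` is `z`-asymmetric, i.e. `λ = (a | a + z)` in Frobenius notation, which
amounts to `λ'_i = λ_i + z` for all `1 ≤ i ≤ rk(λ)`.  `(-1)`-asymmetric
partitions are called orthogonal, `1`-asymmetric ones symplectic, and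
`0`-asymmetric ones are exactly the self-conjugate ones. -/
def ZAsymmetric (z : ℤ) (f : ℕ → ℕ) : Prop :=
  ∀ i < rk f, (conjP f i : ℤ) = (f i : ℤ) + z

/-- The one-row partition `(c)`. -/
def rowP (c : ℕ) : ℕ → ℕ := fun i => if i = 0 then c else 0

/-- `λ` is a `t`-core: no box of the Young diagram has hook length `t`
(the hook length of the box `(i,j)` is `λ_i + λ'_j - i - j + 1`, 1-indexed). -/
def IsTCore (t : ℕ) (f : ℕ → ℕ) : Prop :=
  ∀ i j, j < f i → f i + conjP f j ≠ i + j + 1 + t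

/-! ## Schur functions and universal characters via Jacobi–Trudi determinants -/

/-- The Jacobi–Trudi determinant `det_{1 ≤ i,j ≤ n}(h_{λ_i - μ_j - i + j})`. -/
def sSkewN (lam mu : ℕ → ℕ) (n : ℕ) : SymF :=
  Matrix.det (Matrix.of fun i j : Fin n =>
    hh ((lam i : ℤ) - (mu j : ℤ) - (i : ℤ) + (j : ℤ)))

open Classical in
/-- The skew Schur function `s_{λ/μ}`, defined by the Jacobi–Trudi formula
(and `0` if `μ ⊄ λ`). -/
def sSkew (lam mu : ℕ → ℕ) : SymF :=
  if SubP mu lam then sSkewN lam mu (plen lam) else 0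

/-- The Schur function `s_λ`. -/
def sFun (lam : ℕ → ℕ) : SymF := sSkew lam fun _ => 0

/-- The universal orthogonal character
`o_λ = det_{1 ≤ i,j ≤ n}(h_{λ_i - i + j} - h_{λ_i - i - j})`. -/
def oU (lam : ℕ → ℕ) : SymF :=
  Matrix.det (Matrix.of fun i j : Fin (plen lam) =>
    hh ((lam i : ℤ) - (i : ℤ) + (j : ℤ)) -
      hh ((lam i : ℤ) - (i : ℤ) - (j : ℤ) - 2))

/-- The universal symplectic character
`sp_λ = (1/2) · det_{1 ≤ i,j ≤ n}(h_{λ_i - i + j} + h_{λ_i - i - j + 2})`. -/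
def spU (lam : ℕ → ℕ) : SymF :=
  (1 / 2 : ℚ) • Matrix.det (Matrix.of fun i j : Fin (plen lam) =>
    hh ((lam i : ℤ) - (i : ℤ) + (j : ℤ)) +
      hh ((lam i : ℤ) - (i : ℤ) - (j : ℤ)))

/-- The universal odd orthogonal character
`so_λ = det_{1 ≤ i,j ≤ n}(h_{λ_i - i + j} + h_{λ_i - i - j + 1})`. -/
def soU (lam : ℕ → ℕ) : SymF :=
  Matrix.det (Matrix.of fun i j : Fin (plen lam) =>
    hh ((lam i : ℤ) - (i : ℤ) + (j : ℤ)) +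
      hh ((lam i : ℤ) - (i : ℤ) - (j : ℤ) - 1))

/-- The variant `so⁻_λ = det_{1 ≤ i,j ≤ n}(h_{λ_i - i + j} - h_{λ_i - i - j + 1})`. -/
def soMinusU (lam : ℕ → ℕ) : SymF :=
  Matrix.det (Matrix.of fun i j : Fin (plen lam) =>
    hh ((lam i : ℤ) - (i : ℤ) + (j : ℤ)) -
      hh ((lam i : ℤ) - (i : ℤ) - (j : ℤ) - 1))

/-- The rational universal character `rs_{λ,μ}` (one alphabet), via Koike's block
determinant, for weakly decreasing integer sequences `λ`, `μ` of lengths `n`, `m`. -/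
def rsN (n m : ℕ) (lam mu : ℕ → ℤ) : SymF :=
  Matrix.det (Matrix.fromBlocks
    (Matrix.of fun i j : Fin n => hh (lam i - (i : ℤ) + (j : ℤ)))
    (Matrix.of fun (i : Fin n) (j : Fin m) => hh (lam i - (i : ℤ) - (j : ℤ) - 1))
    (Matrix.of fun (i : Fin m) (j : Fin n) => hh (mu i - (i : ℤ) - (j : ℤ) - 1))
    (Matrix.of fun i j : Fin m => hh (mu i - (i : ℤ) + (j : ℤ))))

/-- `rs_{λ,μ}` for partitions `λ`, `μ`. -/
def rsP (lam mu : ℕ → ℕ) : SymF :=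
  rsN (plen lam) (plen mu) (fun i => (lam i : ℤ)) fun i => (mu i : ℤ)

/-! ## Beta sets, cores, quotients and signs -/

/-- The beta set `β(λ; N) = {λ_i + N - i : 1 ≤ i ≤ N}`. -/
def betaSet (lam : ℕ → ℕ) (N : ℕ) : Finset ℕ :=
  (Finset.range N).image fun i => lam i + (N - 1 - i)

/-- `m_r(λ; N)`: the number of elements of `β(λ; N)` congruent to `r` mod `t`. -/
def mr (t : ℕ) (lam : ℕ → ℕ) (N r : ℕ) : ℕ :=
  ((betaSet lam N).filter fun x => x % t = r).card

/-- The `r`-th component `λ^{(r)}` of the `t`-quotient of `λ` (computed, as per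
the convention of the paper, from a beta set whose size is a multiple of `t`):
writing the elements of `β(λ; N)` in residue class `r` as `ξ_k t + r` with
`ξ_1 > ⋯ > ξ_m ≥ 0`, the `k`-th part is `ξ_k - m + k`. -/
def tQuot (t : ℕ) (lam : ℕ → ℕ) (r : ℕ) : ℕ → ℕ := fun k =>
  let N := t * (plen lam + 1)
  let S := (betaSet lam N).filter fun x => x % t = r
  if k < S.card then (S.sort (· ≤ ·)).getD (S.card - 1 - k) 0 / t + (k + 1) - S.card
  else 0

/-- The `t`-core of `λ`: its `i`-th part is `ξ̃_i - N + i` where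
`ξ̃_1 > ⋯ > ξ̃_N` are the integers `k t + r`, `0 ≤ k < m_r(λ; N)`, `0 ≤ r < t`. -/
def tCore (t : ℕ) (lam : ℕ → ℕ) : ℕ → ℕ := fun i =>
  let N := t * (plen lam + 1)
  let T := (Finset.range t).biUnion fun r =>
    (Finset.range (mr t lam N r)).image fun k => k * t + r
  if i < N then (T.sort (· ≤ ·)).getD (N - 1 - i) 0 + (i + 1) - N else 0

/-- The sign of the permutation `w_t(λ; N)` sorting the beta set so that the
residues mod `t` increase and the entries within a residue class decrease,
computed as `(-1)` to the number of inversions: an inversion is a pair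
`x > y` of elements of the beta set with `x mod t > y mod t`. -/
def sgnW (t : ℕ) (lam : ℕ → ℕ) (N : ℕ) : ℤ :=
  (-1) ^ ((betaSet lam N ×ˢ betaSet lam N).filter fun p : ℕ × ℕ =>
    p.2 < p.1 ∧ p.2 % t < p.1 % t).card

/-! ## Ribbons and tileability -/

/-- The cells of the skew shape `λ/μ` (0-indexed rows and columns). -/
def SkewCells (lam mu : ℕ → ℕ) : Set (ℕ × ℕ) := {c | mu c.1 ≤ c.2 ∧ c.2 < lam c.1}

/-- Two cells are adjacent if they share an edge. -/
def CellAdj (c d : ℕ × ℕ) : Prop :=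
  (c.1 = d.1 ∧ (c.2 + 1 = d.2 ∨ d.2 + 1 = c.2)) ∨
    (c.2 = d.2 ∧ (c.1 + 1 = d.1 ∨ d.1 + 1 = c.1))

/-- A set of cells is (edge-)connected. -/
def ConnectedCells (S : Set (ℕ × ℕ)) : Prop :=
  ∀ c ∈ S, ∀ d ∈ S, Relation.ReflTransGen (fun x y => x ∈ S ∧ y ∈ S ∧ CellAdj x y) c d

/-- The set of cells contains a `2 × 2` square. -/
def Has2x2 (S : Set (ℕ × ℕ)) : Prop :=
  ∃ i j, (i, j) ∈ S ∧ (i + 1, j) ∈ S ∧ (i, j + 1) ∈ S ∧ (i + 1, j + 1) ∈ S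

/-- The skew shape `λ/μ` is a `t`-ribbon: connected, `t` cells, no `2 × 2` square. -/
def IsRibbon (t : ℕ) (lam mu : ℕ → ℕ) : Prop :=
  SubP mu lam ∧ (SkewCells lam mu).ncard = t ∧
    ConnectedCells (SkewCells lam mu) ∧ ¬Has2x2 (SkewCells lam mu)

/-- The height of a ribbon `λ/μ`: one less than the number of rows it occupies. -/
def ribbonHeight (lam mu : ℕ → ℕ) : ℕ :=
  (Prod.fst '' SkewCells lam mu).ncard - 1

/-- `ν` (as `ν 0, ν 1, …, ν k`) is a ribbon decomposition of the skew shape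
`λ/μ` into `t`-ribbons: `ν 0 = μ`, `ν k = λ`, every `ν i` is a partition, and
each `ν (i+1) / ν i` is a `t`-ribbon. -/
def IsRibbonDecomp (t : ℕ) (mu lam : ℕ → ℕ) (k : ℕ) (ν : ℕ → ℕ → ℕ) : Prop :=
  ν 0 = mu ∧ ν k = lam ∧ (∀ i ≤ k, IsPartition (ν i)) ∧
    ∀ i < k, IsRibbon t (ν (i + 1)) (ν i)

/-- The height of a ribbon decomposition: the sum of the heights of its ribbons.
The sign `sgn_t(λ/μ)` is `(-1)` to this quantity (for any decomposition). -/
def decompHeight (ν : ℕ → ℕ → ℕ) (k : ℕ) : ℕ :=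
  ∑ i ∈ Finset.range k, ribbonHeight (ν (i + 1)) (ν i)

/-- The skew shape `λ/μ` is tileable by `t`-ribbons. -/
def Tileable (t : ℕ) (mu lam : ℕ → ℕ) : Prop :=
  ∃ k ν, IsRibbonDecomp t mu lam k ν

/-! ## The signs `ε` of Ayyer–Kumari -/

/-- The exponent `ε^o_{λ;nt}`. -/
def epsO (t : ℕ) (lam : ℕ → ℕ) (n : ℕ) : ℕ :=
  (∑ r ∈ Finset.Icc ((t + 2) / 2) (t - 1), Nat.choose (mr t lam (n * t) r + 1) 2)
    + rk (tCore t lam)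
    + if 2 ∣ t then Nat.choose (n + 1) 2 + n * rk (tCore t lam) else 0

/-- The exponent `ε^sp_{λ;nt}`. -/
def epsSp (t : ℕ) (lam : ℕ → ℕ) (n : ℕ) : ℕ :=
  (∑ r ∈ Finset.Icc (t / 2) (t - 2), Nat.choose (mr t lam (n * t) r + 1) 2)
    + if 2 ∣ t then Nat.choose (n + 1) 2 + n * rk (tCore t lam) else 0

/-- The exponent `ε^so_{λ;nt}`. -/
def epsSo (t : ℕ) (lam : ℕ → ℕ) (n : ℕ) : ℕ :=
  (∑ r ∈ Finset.Icc ((t + 1) / 2) (t - 1), Nat.choose (mr t lam (n * t) r + 1) 2)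
    + if 2 ∣ t then 0 else n * rk (tCore t lam)

/-! ## Evaluation at a finite complex alphabet -/

/-- The complete homogeneous polynomial `h_r(y₁,…,y_N)` evaluated at complex
numbers: the sum over all multisets of size `r` of the product of the values. -/
def hEval {N : ℕ} (y : Fin N → ℂ) (r : ℕ) : ℂ :=
  ∑ m ∈ (Finset.univ : Finset (Fin N)).sym r, (Multiset.map y (m : Multiset (Fin N))).prod

/-- Evaluation of a universal symmetric function at the finite alphabet
`y₁, …, y_N` (substituting `h_r ↦ h_r(y)`). -/
def evalSym {N : ℕ} (y : Fin N → ℂ) : SymF →ₐ[ℚ] ℂ :=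
  MvPolynomial.aeval fun n => hEval y (n + 1)

/-- The Schur polynomial `s_λ(y₁,…,y_N)` (equal to the ratio of alternants when
the `y_i` are distinct, and `0` when `l(λ) > N`). -/
def schurC {N : ℕ} (lam : ℕ → ℕ) (y : Fin N → ℂ) : ℂ := evalSym y (sFun lam)

/-- The algebra homomorphism `φ_t^q : Λ → Λ[q]` with
`φ_t^q h_{at+b} = q^b ∑_{k ≥ 0} q^{kt} h_{a-k}` for `a ≥ 0`, `0 ≤ b ≤ t-1`
(the sum is finite since `h_{a-k} = 0` for `k > a`). -/
def phiQ (t : ℕ) : SymF →ₐ[ℚ] Polynomial SymF :=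
  MvPolynomial.aeval fun m =>
    ∑ k ∈ Finset.range ((m + 1) / t + 1),
      Polynomial.C (hh ((((m + 1) / t - k : ℕ)) : ℤ)) *
        Polynomial.X ^ ((m + 1) % t + k * t)


/-! ### Auxiliary lemmas for the proof -/

section AuxProof

open Finset

/-- A finset of naturals closed under predecessor-membership is an initial segment. -/
lemma AK.lower_finset_eq_range (S : Finset ℕ) (h : ∀ k, k + 1 ∈ S → k ∈ S) :
    S = Finset.range S.card := by
  have hdown : ∀ b a, a ≤ b → b ∈ S → a ∈ S := by
    intro b
    induction b with
    | zero => intro a ha hb; simpa [Nat.le_zero.mp ha] using hb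
    | succ m ih =>
      intro a ha hb
      rcases Nat.eq_or_lt_of_le ha with rfl | hlt
      · exact hb
      · exact ih a (by omega) (h m hb)
  rcases S.eq_empty_or_nonempty with rfl | hne
  · simp
  · have hm := S.max'_mem hne
    have hS : S = Finset.range (S.max' hne + 1) := by
      apply Finset.Subset.antisymm
      · intro x hx
        simp only [Finset.mem_range, Nat.lt_succ_iff]
        exact S.le_max' x hx
      · intro x hx
        simp only [Finset.mem_range, Nat.lt_succ_iff] at hx
        exact hdown _ x hx hm
    have hc : S.card = (Finset.range (S.max' hne + 1)).card := congrArg Finset.card hS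
    rw [Finset.card_range] at hc
    rw [hc]; exact hS

/-- A bounded, predecessor-closed set of naturals: membership iff `< ncard`. -/
lemma AK.mem_iff_lt_ncard (S : Set ℕ) (M : ℕ) (hb : ∀ i ∈ S, i < M)
    (h : ∀ k, k + 1 ∈ S → k ∈ S) (i : ℕ) : i ∈ S ↔ i < S.ncard := by
  classical
  have hF : S = ↑((Finset.range M).filter (· ∈ S)) := by
    ext j
    simp only [Finset.coe_filter, Finset.mem_range, Set.mem_setOf_eq]
    exact ⟨fun hj => ⟨hb j hj, hj⟩, fun hj => hj.2⟩
  set F := (Finset.range M).filter (· ∈ S) with hFdef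
  have hcard : S.ncard = F.card := by rw [hF]; exact Set.ncard_coe_finset F
  have hFl : ∀ k, k + 1 ∈ F → k ∈ F := by
    intro k hk
    rw [hFdef, Finset.mem_filter, Finset.mem_range] at hk ⊢
    have hkS := h k hk.2
    exact ⟨hb k hkS, hkS⟩
  have hrange := AK.lower_finset_eq_range F hFl
  have hmem : i ∈ F ↔ i < F.card := by
    conv_lhs => rw [hrange]
    exact Finset.mem_range
  rw [hcard, ← hmem]
  conv_lhs => rw [hF]
  simp

/-- Eventual vanishing beyond `plen`. -/
lemma AK.plen_zero {f : ℕ → ℕ} (hf : IsPartition f) {i : ℕ} (hi : plen f ≤ i) : f i = 0 := by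
  have hne : {N | ∀ j, N ≤ j → f j = 0}.Nonempty := by
    obtain ⟨N, hN⟩ := hf.2; exact ⟨N, hN⟩
  have := Nat.sInf_mem hne
  exact this i hi

lemma AK.lt_plen {f : ℕ → ℕ} (hf : IsPartition f) {i : ℕ} (hi : f i ≠ 0) : i < plen f := by
  by_contra h
  exact hi (AK.plen_zero hf (by omega))

/-- The fundamental conjugation lemma: `i < λ'_j ↔ j < λ_i`. -/
lemma AK.conj_lt_iff {f : ℕ → ℕ} (hf : IsPartition f) (i j : ℕ) :
    i < conjP f j ↔ j < f i := by
  have := AK.mem_iff_lt_ncard {i | j < f i} (plen f)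
    (fun k hk => AK.lt_plen hf (by simp only [Set.mem_setOf_eq] at hk; omega))
    (fun k hk => by
      simp only [Set.mem_setOf_eq] at hk ⊢
      exact lt_of_lt_of_le hk (hf.1 (Nat.le_succ k))) i
  rw [conjP]
  simp only [Set.mem_setOf_eq] at this
  exact this.symm

/-- Rank characterisation: `i < rk λ ↔ i < λ_i`, for `f` antitone. -/
lemma AK.rk_lt_iff {f : ℕ → ℕ} (hf : Antitone f) (i : ℕ) :
    i < rk f ↔ i < f i := by
  have := AK.mem_iff_lt_ncard {i | i < f i} (f 0)
    (fun k hk => by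
      simp only [Set.mem_setOf_eq] at hk
      exact lt_of_lt_of_le hk (hf (Nat.zero_le k)))
    (fun k hk => by
      simp only [Set.mem_setOf_eq] at hk ⊢
      have h2 : f (k + 1) ≤ f k := hf (Nat.le_succ k)
      omega) i
  rw [rk]
  simp only [Set.mem_setOf_eq] at this
  exact this.symm

lemma AK.conj_le_plen {f : ℕ → ℕ} (hf : IsPartition f) (j : ℕ) :
    conjP f j ≤ plen f := by
  rw [conjP]
  have h1 : {i | j < f i} ⊆ Set.Iio (plen f) := by
    intro k hk
    simp only [Set.mem_setOf_eq] at hk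
    exact AK.lt_plen hf (by omega)
  calc Set.ncard {i | j < f i} ≤ Set.ncard (Set.Iio (plen f)) :=
        Set.ncard_le_ncard h1 (Set.finite_Iio _)
    _ = plen f := by
        rw [← Finset.coe_range, Set.ncard_coe_finset, Finset.card_range]

lemma AK.conj_antitone {f : ℕ → ℕ} (hf : IsPartition f) : Antitone (conjP f) := by
  intro a b hab
  rw [conjP, conjP]
  apply Set.ncard_le_ncard
  · intro k hk
    simp only [Set.mem_setOf_eq] at hk ⊢
    omega
  · apply Set.Finite.subset (Set.finite_Iio (plen f))
    intro k hk
    simp only [Set.mem_setOf_eq, Set.mem_Iio] at hk ⊢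
    exact AK.lt_plen hf (by omega)

lemma AK.rk_conj {f : ℕ → ℕ} (hf : IsPartition f) : rk (conjP f) = rk f := by
  rw [rk, rk]
  congr 1
  ext i
  simp only [Set.mem_setOf_eq]
  exact AK.conj_lt_iff hf i i

end AuxProof

section AuxProof2

open Finset

lemma AK.mul_add_mod' {t : ℕ} (q s : ℕ) (hs : s < t) : (q * t + s) % t = s := by
  rw [mul_comm, Nat.mul_add_mod, Nat.mod_eq_of_lt hs]

lemma AK.mul_add_div' {t : ℕ} (ht : 0 < t) (q s : ℕ) (hs : s < t) : (q * t + s) / t = q := by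
  rw [mul_comm, Nat.mul_add_div ht, Nat.div_eq_of_lt hs, add_zero]

lemma AK.div_mul_add_mod {t : ℕ} (x : ℕ) : x / t * t + x % t = x := by
  have := Nat.div_add_mod x t
  have h2 : x / t * t = t * (x / t) := Nat.mul_comm _ _
  omega

lemma AK.lt_iff_div_le {t x y : ℕ} (ht : 0 < t) (h : y % t < x % t) :
    y < x ↔ y / t ≤ x / t := by
  constructor
  · intro h'; exact Nat.div_le_div_right h'.le
  · intro h'
    have hy := AK.div_mul_add_mod (t := t) y
    have hx := AK.div_mul_add_mod (t := t) x
    have h2 : y / t * t ≤ x / t * t := Nat.mul_le_mul_right t h'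
    omega

lemma AK.mod_succ_iff {t r : ℕ} (hr : r < t) (x : ℕ) :
    (x + 1) % t = r ↔ x % t = (r + (t - 1)) % t := by
  have h1 : x + 1 + (t - 1) = x + t := by omega
  constructor
  · intro h
    calc x % t = (x + t) % t := (Nat.add_mod_right x t).symm
      _ = (x + 1 + (t - 1)) % t := by rw [h1]
      _ = ((x + 1) % t + (t - 1)) % t := (Nat.mod_add_mod _ _ _).symm
      _ = (r + (t - 1)) % t := by rw [h]
  · intro h
    have h2 : (x + 1) % t = (x % t + 1) % t := by
      rw [Nat.mod_add_mod]
    rw [h2, h]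
    calc ((r + (t - 1)) % t + 1) % t = (r + (t - 1) + 1) % t := Nat.mod_add_mod _ _ _
      _ = (r + t) % t := by rw [show r + (t - 1) + 1 = r + t by omega]
      _ = r % t := Nat.add_mod_right r t
      _ = r := Nat.mod_eq_of_lt hr

lemma AK.mod_pred_iff {t r : ℕ} (ht : 0 < t) (hr : r < t) {x : ℕ} (hx : 1 ≤ x) :
    (x - 1) % t = r ↔ x % t = (r + 1) % t := by
  have h := AK.mod_succ_iff (t := t) (r := (r + 1) % t) (Nat.mod_lt _ ht) (x - 1)
  rw [show x - 1 + 1 = x by omega] at h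
  have h2 : ((r + 1) % t + (t - 1)) % t = r := by
    calc ((r + 1) % t + (t - 1)) % t = (r + 1 + (t - 1)) % t := Nat.mod_add_mod _ _ _
      _ = (r + t) % t := by rw [show r + 1 + (t - 1) = r + t by omega]
      _ = r % t := Nat.add_mod_right r t
      _ = r := Nat.mod_eq_of_lt hr
  rw [h2] at h
  exact h.symm

lemma AK.mod_add_add {t d d' : ℕ} (hdd : d + d' = t) {r : ℕ} (hr : r < t) :
    ((r + d) % t + d') % t = r := by
  calc ((r + d) % t + d') % t = (r + d + d') % t := Nat.mod_add_mod _ _ _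
    _ = (r + t) % t := by rw [add_assoc, hdd]
    _ = r % t := Nat.add_mod_right r t
    _ = r := Nat.mod_eq_of_lt hr

lemma AK.mod_compl_iff {t : ℕ} (ht : 0 < t) {x y s : ℕ} (hs : s < t)
    (hd : t ∣ (x + y + 1)) : x % t = s ↔ y % t = t - 1 - s := by
  have hxm : x % t < t := Nat.mod_lt _ ht
  have hym : y % t < t := Nat.mod_lt _ ht
  have hmod0 : (x % t + y % t + 1) % t = 0 := by
    have e1 : (x % t + y % t + 1) % t = (x + y + 1) % t := by
      calc (x % t + y % t + 1) % t = ((x % t + y % t) % t + 1) % t := (Nat.mod_add_mod _ _ _).symm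
        _ = ((x + y) % t + 1) % t := by rw [Nat.add_mod x y t]
        _ = (x + y + 1) % t := Nat.mod_add_mod _ _ _
    rw [e1]
    obtain ⟨c, hc⟩ := hd
    rw [hc, Nat.mul_mod_right]
  have h1 : x % t + y % t + 1 = t := by
    obtain ⟨k, hk⟩ := Nat.dvd_of_mod_eq_zero hmod0
    have hk1 : k = 1 := by
      by_contra hne
      rcases Nat.lt_or_ge k 1 with h | h
      · rw [show k = 0 by omega, Nat.mul_zero] at hk; omega
      · have hk2 : 2 ≤ k := by omega
        have h3 : t * 2 ≤ t * k := Nat.mul_le_mul_left t hk2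
        omega
    rw [hk1, Nat.mul_one] at hk
    omega
  omega

end AuxProof2

section AuxProof3

open Finset

lemma AK.beta_mem {f : ℕ → ℕ} {N x : ℕ} :
    x ∈ betaSet f N ↔ ∃ i, i < N ∧ f i + (N - 1 - i) = x := by
  simp [betaSet]

lemma AK.beta_card {f : ℕ → ℕ} (hf : Antitone f) (N : ℕ) : (betaSet f N).card = N := by
  rw [betaSet, Finset.card_image_of_injOn, Finset.card_range]
  intro i hi j hj hij
  simp only [Finset.coe_range, Set.mem_Iio] at hi hj
  have hij' : f i + (N - 1 - i) = f j + (N - 1 - j) := hij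
  by_contra hne
  rcases Nat.lt_or_ge i j with h | h
  · have := hf h.le; omega
  · have h' : j < i := by omega
    have := hf h'.le; omega

lemma AK.beta_lt {f : ℕ → ℕ} {N : ℕ} (hfN : ∀ i, f i ≤ N) {x : ℕ}
    (hx : x ∈ betaSet f N) : x < 2 * N := by
  obtain ⟨i, hi, rfl⟩ := AK.beta_mem.1 hx
  have := hfN i; omega

lemma AK.beta_partition {lam : ℕ → ℕ} {N : ℕ} (hlam : IsPartition lam)
    (hlen : plen lam ≤ N) (hwidth : lam 0 ≤ N) :
    Disjoint (betaSet lam N) ((betaSet (conjP lam) N).image (fun y => 2 * N - 1 - y)) ∧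
      betaSet lam N ∪ (betaSet (conjP lam) N).image (fun y => 2 * N - 1 - y)
        = Finset.range (2 * N) := by
  classical
  set β := betaSet lam N with hβ
  set B' := (betaSet (conjP lam) N).image (fun y => 2 * N - 1 - y) with hB'
  have hlamN : ∀ i, lam i ≤ N := fun i => le_trans (hlam.1 (Nat.zero_le i)) hwidth
  have hconjN : ∀ j, conjP lam j ≤ N := fun j => le_trans (AK.conj_le_plen hlam j) hlen
  have hβlt : ∀ x ∈ β, x < 2 * N := fun x hx => AK.beta_lt hlamN hx
  have hβ'lt : ∀ x ∈ betaSet (conjP lam) N, x < 2 * N := fun x hx => AK.beta_lt hconjN hx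
  have hdisj : Disjoint β B' := by
    rw [Finset.disjoint_left]
    intro x hxβ hxB'
    obtain ⟨i, hi, hix⟩ := AK.beta_mem.1 hxβ
    obtain ⟨y, hy, hyx⟩ := Finset.mem_image.1 hxB'
    obtain ⟨j, hj, hjy⟩ := AK.beta_mem.1 hy
    have hylt : y < 2 * N := hβ'lt y hy
    rcases Nat.lt_or_ge j (lam i) with hc | hc
    · have h1 : i < conjP lam j := (AK.conj_lt_iff hlam i j).2 hc
      omega
    · have h1 : conjP lam j ≤ i := by
        by_contra h
        have := (AK.conj_lt_iff hlam i j).1 (by omega)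
        omega
      omega
  have hcardB' : B'.card = N := by
    rw [hB', Finset.card_image_of_injOn, AK.beta_card (AK.conj_antitone hlam)]
    intro a ha b hb hab
    simp only [Finset.mem_coe] at ha hb
    have hab' : 2 * N - 1 - a = 2 * N - 1 - b := hab
    have h1 := hβ'lt a ha
    have h2 := hβ'lt b hb
    omega
  have hcover : β ∪ B' = Finset.range (2 * N) := by
    apply Finset.eq_of_subset_of_card_le
    · intro x hx
      rcases Finset.mem_union.1 hx with h | h
      · exact Finset.mem_range.2 (hβlt x h)
      · obtain ⟨y, hy, hyx⟩ := Finset.mem_image.1 h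
        have := hβ'lt y hy
        exact Finset.mem_range.2 (by omega)
    · rw [Finset.card_range, Finset.card_union_of_disjoint hdisj,
        AK.beta_card hlam.1, hcardB']
      omega
  exact ⟨hdisj, hcover⟩

lemma AK.beta_compl {lam : ℕ → ℕ} {N : ℕ} (hlam : IsPartition lam)
    (hlen : plen lam ≤ N) (hwidth : lam 0 ≤ N) :
    ∀ x, x < 2 * N → (x ∈ betaSet (conjP lam) N ↔ ¬(2 * N - 1 - x ∈ betaSet lam N)) := by
  classical
  obtain ⟨hdisj, hcover⟩ := AK.beta_partition hlam hlen hwidth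
  have hconjN : ∀ j, conjP lam j ≤ N := fun j => le_trans (AK.conj_le_plen hlam j) hlen
  have hβ'lt : ∀ x ∈ betaSet (conjP lam) N, x < 2 * N := fun x hx => AK.beta_lt hconjN hx
  intro x hx
  constructor
  · intro hxc hmem
    have hxB' : 2 * N - 1 - x ∈ (betaSet (conjP lam) N).image (fun y => 2 * N - 1 - y) :=
      Finset.mem_image.2 ⟨x, hxc, rfl⟩
    exact Finset.disjoint_left.1 hdisj hmem hxB'
  · intro hnot
    have hmem : 2 * N - 1 - x ∈ Finset.range (2 * N) := Finset.mem_range.2 (by omega)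
    rw [← hcover] at hmem
    rcases Finset.mem_union.1 hmem with h | h
    · exact absurd h hnot
    · obtain ⟨y, hy, hyx⟩ := Finset.mem_image.1 h
      have h1 := hβ'lt y hy
      have h2 : y = x := by omega
      rwa [← h2]

lemma AK.core_down {t : ℕ} {lam : ℕ → ℕ} {N : ℕ} (hlam : IsPartition lam)
    (hcore : IsTCore t lam) (hlen : plen lam ≤ N) (hwidth : lam 0 ≤ N)
    {x : ℕ} (hx : x ∈ betaSet lam N) (hxt : t ≤ x) : x - t ∈ betaSet lam N := by
  by_contra hnot
  obtain ⟨i, hi, hix⟩ := AK.beta_mem.1 hx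
  have hlamN : ∀ i, lam i ≤ N := fun i => le_trans (hlam.1 (Nat.zero_le i)) hwidth
  have hxlt : x < 2 * N := AK.beta_lt hlamN hx
  have hcompl := AK.beta_compl hlam hlen hwidth (2 * N - 1 - (x - t)) (by omega)
  rw [show 2 * N - 1 - (2 * N - 1 - (x - t)) = x - t by omega] at hcompl
  have hmem : 2 * N - 1 - (x - t) ∈ betaSet (conjP lam) N := hcompl.2 hnot
  obtain ⟨j, hj, hjy⟩ := AK.beta_mem.1 hmem
  rcases Nat.lt_or_ge j (lam i) with hc | hc
  · exact hcore i j hc (by omega)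
  · have h1 : conjP lam j ≤ i := by
      by_contra h
      have := (AK.conj_lt_iff hlam i j).1 (by omega)
      omega
    omega

lemma AK.conj_down {t : ℕ} {lam : ℕ → ℕ} {N : ℕ} (hlam : IsPartition lam)
    (hcore : IsTCore t lam) (hlen : plen lam ≤ N) (hwidth : lam 0 ≤ N)
    {x : ℕ} (hx : x ∈ betaSet (conjP lam) N) (hxt : t ≤ x) :
    x - t ∈ betaSet (conjP lam) N := by
  have hconjN : ∀ j, conjP lam j ≤ N := fun j => le_trans (AK.conj_le_plen hlam j) hlen
  have hxlt : x < 2 * N := AK.beta_lt hconjN hx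
  have h1 := (AK.beta_compl hlam hlen hwidth x hxlt).1 hx
  apply (AK.beta_compl hlam hlen hwidth (x - t) (by omega)).2
  intro hmem
  rw [show 2 * N - 1 - (x - t) = (2 * N - 1 - x) + t by omega] at hmem
  have h2 := AK.core_down hlam hcore hlen hwidth hmem (by omega)
  rw [show 2 * N - 1 - x + t - t = 2 * N - 1 - x by omega] at h2
  exact h1 h2

end AuxProof3

section AuxProof4

open Finset

lemma AK.class_mem_iff {t : ℕ} (ht : 0 < t) (S : Finset ℕ)
    (down : ∀ x ∈ S, t ≤ x → x - t ∈ S) {r : ℕ} (hr : r < t) :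
    ∀ x, x % t = r → (x ∈ S ↔ x / t < (S.filter (fun y => y % t = r)).card) := by
  classical
  set C := (Finset.range (S.sup id + 1)).filter (fun k => k * t + r ∈ S) with hC
  have hCmem : ∀ k, k ∈ C ↔ k * t + r ∈ S := by
    intro k
    rw [hC, Finset.mem_filter, Finset.mem_range]
    refine ⟨fun h => h.2, fun h => ⟨?_, h⟩⟩
    have h1 : k * 1 ≤ k * t := Nat.mul_le_mul_left k ht
    have h2 : k * t + r ≤ S.sup id := Finset.le_sup (f := id) h
    omega
  have hClower : ∀ k, k + 1 ∈ C → k ∈ C := by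
    intro k hk
    rw [hCmem] at hk ⊢
    have h1 : (k + 1) * t = k * t + t := by ring
    have h2 := down _ hk (by omega)
    rw [show (k + 1) * t + r - t = k * t + r by omega] at h2
    exact h2
  have hCr := AK.lower_finset_eq_range C hClower
  have hfil : S.filter (fun y => y % t = r) = C.image (fun k => k * t + r) := by
    ext y
    rw [Finset.mem_filter, Finset.mem_image]
    constructor
    · rintro ⟨hyS, hyr⟩
      have hy2 : y / t * t + r = y := by
        have := AK.div_mul_add_mod (t := t) y
        omega
      exact ⟨y / t, (hCmem _).2 (by rw [hy2]; exact hyS), hy2⟩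
    · rintro ⟨k, hk, rfl⟩
      exact ⟨(hCmem _).1 hk, AK.mul_add_mod' k r hr⟩
  have hcard : (S.filter (fun y => y % t = r)).card = C.card := by
    rw [hfil, Finset.card_image_of_injOn, ]
    intro a _ b _ hab
    have hab' : a * t + r = b * t + r := hab
    have : a * t = b * t := by omega
    exact Nat.eq_of_mul_eq_mul_right ht this
  intro x hxr
  rw [hcard]
  have hx2 : x / t * t + r = x := by
    have := AK.div_mul_add_mod (t := t) x
    omega
  constructor
  · intro hxS
    have h3 : x / t ∈ C := (hCmem _).2 (by rw [hx2]; exact hxS)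
    rw [hCr, Finset.mem_range] at h3
    exact h3
  · intro hlt
    have h3 : x / t ∈ C := by rw [hCr, Finset.mem_range]; exact hlt
    have := (hCmem _).1 h3
    rwa [hx2] at this

lemma AK.count_le {t : ℕ} (ht : 0 < t) (S : Finset ℕ)
    (down : ∀ x ∈ S, t ≤ x → x - t ∈ S) {r : ℕ} (hr : r < t) (K : ℕ) :
    (S.filter (fun y => y % t = r ∧ y / t ≤ K)).card
      = min (K + 1) ((S.filter (fun y => y % t = r)).card) := by
  classical
  set m := (S.filter (fun y => y % t = r)).card with hm
  have hmi := AK.class_mem_iff ht S down hr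
  have himg : S.filter (fun y => y % t = r ∧ y / t ≤ K)
      = (Finset.range (min (K + 1) m)).image (fun k => k * t + r) := by
    ext y
    rw [Finset.mem_filter, Finset.mem_image]
    constructor
    · rintro ⟨hyS, hyr, hyK⟩
      have hy2 : y / t * t + r = y := by
        have := AK.div_mul_add_mod (t := t) y
        omega
      refine ⟨y / t, Finset.mem_range.2 ?_, hy2⟩
      have := (hmi y hyr).1 hyS
      exact lt_min (by omega) this
    · rintro ⟨k, hk, rfl⟩
      rw [Finset.mem_range] at hk
      have h1 : k < K + 1 := lt_of_lt_of_le hk (min_le_left _ _)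
      have h2 : k < m := lt_of_lt_of_le hk (min_le_right _ _)
      have hmod : (k * t + r) % t = r := AK.mul_add_mod' k r hr
      have hdiv : (k * t + r) / t = k := AK.mul_add_div' ht k r hr
      refine ⟨(hmi _ hmod).2 (by rw [hdiv]; exact h2), hmod, by rw [hdiv]; omega⟩
  rw [himg, Finset.card_image_of_injOn, Finset.card_range]
  intro a _ b _ hab
  have hab' : a * t + r = b * t + r := hab
  have : a * t = b * t := by omega
  exact Nat.eq_of_mul_eq_mul_right ht this

lemma AK.count_ge {t : ℕ} (ht : 0 < t) (S : Finset ℕ)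
    (down : ∀ x ∈ S, t ≤ x → x - t ∈ S) {r : ℕ} (hr : r < t) (K : ℕ) :
    (S.filter (fun y => y % t = r ∧ K ≤ y / t)).card
      = (S.filter (fun y => y % t = r)).card - K := by
  classical
  set m := (S.filter (fun y => y % t = r)).card with hm
  have hmi := AK.class_mem_iff ht S down hr
  have himg : S.filter (fun y => y % t = r ∧ K ≤ y / t)
      = (Finset.Ico K m).image (fun k => k * t + r) := by
    ext y
    rw [Finset.mem_filter, Finset.mem_image]
    constructor
    · rintro ⟨hyS, hyr, hyK⟩
      have hy2 : y / t * t + r = y := by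
        have := AK.div_mul_add_mod (t := t) y
        omega
      exact ⟨y / t, Finset.mem_Ico.2 ⟨hyK, (hmi y hyr).1 hyS⟩, hy2⟩
    · rintro ⟨k, hk, rfl⟩
      rw [Finset.mem_Ico] at hk
      have hmod : (k * t + r) % t = r := AK.mul_add_mod' k r hr
      have hdiv : (k * t + r) / t = k := AK.mul_add_div' ht k r hr
      exact ⟨(hmi _ hmod).2 (by rw [hdiv]; exact hk.2), hmod, by rw [hdiv]; exact hk.1⟩
  rw [himg, Finset.card_image_of_injOn, Nat.card_Ico]
  intro a _ b _ hab
  have hab' : a * t + r = b * t + r := hab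
  have : a * t = b * t := by omega
  exact Nat.eq_of_mul_eq_mul_right ht this

lemma AK.range_class_card {t : ℕ} (ht : 0 < t) {r : ℕ} (hr : r < t) (M : ℕ) :
    ((Finset.range (M * t)).filter (fun y => y % t = r)).card = M := by
  have himg : (Finset.range (M * t)).filter (fun y => y % t = r)
      = (Finset.range M).image (fun k => k * t + r) := by
    ext y
    rw [Finset.mem_filter, Finset.mem_image, Finset.mem_range]
    constructor
    · rintro ⟨hy, hyr⟩
      have hy2 : y / t * t + r = y := by
        have := AK.div_mul_add_mod (t := t) y
        omega
      exact ⟨y / t, Finset.mem_range.2 ((Nat.div_lt_iff_lt_mul ht).2 hy), hy2⟩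
    · rintro ⟨k, hk, rfl⟩
      rw [Finset.mem_range] at hk
      have h1 : (k + 1) * t ≤ M * t := Nat.mul_le_mul_right t (by omega)
      have h2 : (k + 1) * t = k * t + t := by ring
      exact ⟨by omega, AK.mul_add_mod' k r hr⟩
  rw [himg, Finset.card_image_of_injOn, Finset.card_range]
  intro a _ b _ hab
  have hab' : a * t + r = b * t + r := hab
  have : a * t = b * t := by omega
  exact Nat.eq_of_mul_eq_mul_right ht this

lemma AK.card_filter_prod (u v : Finset ℕ) (R : ℕ → ℕ → Prop)
    [∀ x y, Decidable (R x y)] :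
    ((u ×ˢ v).filter (fun p => R p.1 p.2)).card = ∑ x ∈ u, (v.filter (R x)).card := by
  classical
  rw [Finset.card_eq_sum_card_fiberwise (f := fun p => p.1) (t := u)
    (fun p hp => (Finset.mem_product.1 (Finset.mem_filter.1 hp).1).1)]
  refine Finset.sum_congr rfl fun x hx => ?_
  apply Finset.card_nbij' (i := fun p => p.2) (j := fun y => (x, y))
  · intro p hp
    simp only [Finset.mem_coe, Finset.mem_filter, Finset.mem_product] at hp ⊢
    obtain ⟨⟨⟨h1, h2⟩, h3⟩, h4⟩ := hp
    exact ⟨h2, by rw [← h4]; exact h3⟩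
  · intro y hy
    simp only [Finset.mem_coe, Finset.mem_filter, Finset.mem_product] at hy ⊢
    exact ⟨⟨⟨hx, hy.1⟩, hy.2⟩, trivial⟩
  · intro p hp
    simp only [Finset.mem_coe, Finset.mem_filter] at hp
    obtain ⟨a, b⟩ := p
    simp only at hp ⊢
    rw [hp.2]
  · intro y hy
    rfl

lemma AK.card_filter_prod' (u v : Finset ℕ) (R : ℕ → ℕ → Prop)
    [∀ x y, Decidable (R x y)] :
    ((u ×ˢ v).filter (fun p => R p.1 p.2)).card = ∑ y ∈ v, (u.filter (R · y)).card := by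
  classical
  rw [Finset.card_eq_sum_card_fiberwise (f := fun p => p.2) (t := v)
    (fun p hp => (Finset.mem_product.1 (Finset.mem_filter.1 hp).1).2)]
  refine Finset.sum_congr rfl fun y hy => ?_
  apply Finset.card_nbij' (i := fun p => p.1) (j := fun x => (x, y))
  · intro p hp
    simp only [Finset.mem_coe, Finset.mem_filter, Finset.mem_product] at hp ⊢
    obtain ⟨⟨⟨h1, h2⟩, h3⟩, h4⟩ := hp
    exact ⟨h1, by rw [← h4]; exact h3⟩
  · intro x hx
    simp only [Finset.mem_coe, Finset.mem_filter, Finset.mem_product] at hx ⊢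
    exact ⟨⟨⟨hx.1, hy⟩, hx.2⟩, trivial⟩
  · intro p hp
    simp only [Finset.mem_coe, Finset.mem_filter] at hp
    obtain ⟨a, b⟩ := p
    simp only at hp ⊢
    rw [hp.2]
  · intro x hx
    rfl

end AuxProof4

section AuxProof5

open Finset

/-- Complementation of class counts: `μ_s + μ'_{t-1-s} = 2n`. -/
lemma AK.mu_compl {t n : ℕ} {lam : ℕ → ℕ} (ht : 0 < t) (hlam : IsPartition lam)
    (hlen : plen lam ≤ n * t) (hwidth : lam 0 ≤ n * t) {s : ℕ} (hs : s < t) :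
    ((betaSet lam (n * t)).filter (fun y => y % t = s)).card
      + ((betaSet (conjP lam) (n * t)).filter (fun y => y % t = t - 1 - s)).card
      = 2 * n := by
  classical
  set N := n * t with hN
  obtain ⟨hdisj, hcover⟩ := AK.beta_partition hlam hlen hwidth
  have hconjN : ∀ j, conjP lam j ≤ N := fun j => le_trans (AK.conj_le_plen hlam j) hlen
  have hβ'lt : ∀ x ∈ betaSet (conjP lam) N, x < 2 * N := fun x hx => AK.beta_lt hconjN hx
  have hdvd : ∀ y : ℕ, y < 2 * N → t ∣ (2 * N - 1 - y) + y + 1 := by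
    intro y hy
    rw [show 2 * N - 1 - y + y + 1 = 2 * N by omega]
    exact ⟨2 * n, by rw [hN]; ring⟩
  have h2n : ((Finset.range (2 * N)).filter (fun y => y % t = s)).card = 2 * n := by
    rw [show 2 * N = (2 * n) * t by rw [hN]; ring]
    exact AK.range_class_card ht hs (2 * n)
  have hone : (((betaSet (conjP lam) N).image (fun y => 2 * N - 1 - y)).filter
        (fun y => y % t = s)).card
      = ((betaSet (conjP lam) N).filter (fun y => y % t = t - 1 - s)).card := by
    apply Finset.card_nbij' (i := fun x => 2 * N - 1 - x) (j := fun y => 2 * N - 1 - y)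
    · intro x hx
      rw [Finset.mem_coe, Finset.mem_filter, Finset.mem_image] at hx
      obtain ⟨⟨y, hy, rfl⟩, hmod⟩ := hx
      have hylt := hβ'lt y hy
      beta_reduce
      rw [show 2 * N - 1 - (2 * N - 1 - y) = y by omega]
      exact Finset.mem_filter.2 ⟨hy, (AK.mod_compl_iff ht hs (hdvd y hylt)).1 hmod⟩
    · intro y hy
      rw [Finset.mem_coe, Finset.mem_filter] at hy
      obtain ⟨hy1, hy2⟩ := hy
      have hylt := hβ'lt y hy1
      exact Finset.mem_filter.2 ⟨Finset.mem_image.2 ⟨y, hy1, rfl⟩,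
        (AK.mod_compl_iff ht hs (hdvd y hylt)).2 hy2⟩
    · intro x hx
      rw [Finset.mem_coe, Finset.mem_filter, Finset.mem_image] at hx
      obtain ⟨⟨y, hy, rfl⟩, hmod⟩ := hx
      have hylt := hβ'lt y hy
      beta_reduce
      omega
    · intro y hy
      rw [Finset.mem_coe, Finset.mem_filter] at hy
      have hylt := hβ'lt y hy.1
      beta_reduce
      omega
  rw [← h2n, ← hcover, Finset.filter_union,
    Finset.card_union_of_disjoint (Finset.disjoint_filter_filter hdisj), hone]

/-- The part of the beta set `≥ N` is parametrised by the Durfee square. -/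
lemma AK.high_eq {f : ℕ → ℕ} {N : ℕ} (hf : Antitone f) (h0 : f 0 ≤ N) :
    (betaSet f N).filter (fun x => N ≤ x)
      = (Finset.range (rk f)).image (fun i => f i + (N - 1 - i)) := by
  ext x
  rw [Finset.mem_filter, Finset.mem_image]
  constructor
  · rintro ⟨hx, hNx⟩
    obtain ⟨i, hi, rfl⟩ := AK.beta_mem.1 hx
    refine ⟨i, Finset.mem_range.2 ?_, rfl⟩
    rw [AK.rk_lt_iff hf]
    omega
  · rintro ⟨i, hi, rfl⟩
    rw [Finset.mem_range, AK.rk_lt_iff hf] at hi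
    have h1 : f i ≤ N := le_trans (hf (Nat.zero_le i)) h0
    have hiN : i < N := by omega
    exact ⟨AK.beta_mem.2 ⟨i, hiN, rfl⟩, by omega⟩

lemma AK.rk_card {f : ℕ → ℕ} {N : ℕ} (hf : Antitone f) (h0 : f 0 ≤ N) :
    ((betaSet f N).filter (fun x => N ≤ x)).card = rk f := by
  rw [AK.high_eq hf h0, Finset.card_image_of_injOn, Finset.card_range]
  intro i hi j hj hij
  simp only [Finset.coe_range, Set.mem_Iio] at hi hj
  rw [AK.rk_lt_iff hf] at hi hj
  have h1 : f i ≤ N := le_trans (hf (Nat.zero_le i)) h0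
  have h2 : f j ≤ N := le_trans (hf (Nat.zero_le j)) h0
  have hij' : f i + (N - 1 - i) = f j + (N - 1 - j) := hij
  by_contra hne
  rcases Nat.lt_or_ge i j with h | h
  · have := hf h.le; omega
  · have h' : j < i := by omega
    have := hf h'.le; omega

/-- Orthogonal case: the high parts of `β(λ')` are those of `β(λ)` shifted by `-1`. -/
lemma AK.high_shift_orth {lam : ℕ → ℕ} {N : ℕ} (hlam : IsPartition lam)
    (hasym : ZAsymmetric (-1) lam) (hlen : plen lam ≤ N) (hwidth : lam 0 ≤ N) :
    (betaSet (conjP lam) N).filter (fun x => N ≤ x)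
      = ((betaSet lam N).filter (fun x => N ≤ x)).image (fun x => x - 1) := by
  rw [AK.high_eq (AK.conj_antitone hlam) (le_trans (AK.conj_le_plen hlam 0) hlen),
    AK.high_eq hlam.1 hwidth, AK.rk_conj hlam, Finset.image_image]
  apply Finset.image_congr
  intro i hi
  simp only [Finset.coe_range, Set.mem_Iio] at hi
  have h1 : i < lam i := (AK.rk_lt_iff hlam.1 i).1 hi
  have h2 := hasym i hi
  have h3 : conjP lam i = lam i - 1 := by omega
  simp only [Function.comp]
  rw [h3]
  omega

/-- Symplectic case: the high parts of `β(λ')` are those of `β(λ)` shifted by `+1`. -/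
lemma AK.high_shift_symp {lam : ℕ → ℕ} {N : ℕ} (hlam : IsPartition lam)
    (hasym : ZAsymmetric 1 lam) (hlen : plen lam ≤ N) (hwidth : lam 0 ≤ N) :
    (betaSet (conjP lam) N).filter (fun x => N ≤ x)
      = ((betaSet lam N).filter (fun x => N ≤ x)).image (fun x => x + 1) := by
  rw [AK.high_eq (AK.conj_antitone hlam) (le_trans (AK.conj_le_plen hlam 0) hlen),
    AK.high_eq hlam.1 hwidth, AK.rk_conj hlam, Finset.image_image]
  apply Finset.image_congr
  intro i hi
  simp only [Finset.coe_range, Set.mem_Iio] at hi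
  have h2 := hasym i hi
  have h3 : conjP lam i = lam i + 1 := by omega
  simp only [Function.comp]
  rw [h3]
  omega

end AuxProof5

section AuxProof6

open Finset

lemma AK.mu_high_orth {t n : ℕ} {lam : ℕ → ℕ} (ht : 2 ≤ t) (hn : 0 < n)
    (hlam : IsPartition lam) (hcore : IsTCore t lam) (hasym : ZAsymmetric (-1) lam)
    (hlen : plen lam ≤ n * t) (hwidth : lam 0 ≤ n * t) {r : ℕ} (hr : r < t) :
    ((betaSet (conjP lam) (n * t)).filter (fun y => y % t = r)).card - n
      = ((betaSet lam (n * t)).filter (fun y => y % t = (r + 1) % t)).card - n := by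
  classical
  set N := n * t with hN
  have ht' : 0 < t := by omega
  have hNt : t ≤ N := by
    have h0 : 1 * t ≤ n * t := Nat.mul_le_mul_right t hn
    omega
  have hdownβ : ∀ x ∈ betaSet lam N, t ≤ x → x - t ∈ betaSet lam N :=
    fun x hx hxt => AK.core_down hlam hcore hlen hwidth hx hxt
  have hdownβ' : ∀ x ∈ betaSet (conjP lam) N, t ≤ x → x - t ∈ betaSet (conjP lam) N :=
    fun x hx hxt => AK.conj_down hlam hcore hlen hwidth hx hxt
  have hr' : (r + 1) % t < t := Nat.mod_lt _ ht'
  have hc1 := AK.count_ge ht' _ hdownβ' hr n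
  have hc2 := AK.count_ge ht' _ hdownβ hr' n
  rw [← hc1, ← hc2]
  have hiff : ∀ y : ℕ, (n ≤ y / t) ↔ N ≤ y := fun y => Nat.le_div_iff_mul_le ht'
  have e1 : (betaSet (conjP lam) N).filter (fun y => y % t = r ∧ n ≤ y / t)
      = (betaSet (conjP lam) N).filter (fun y => y % t = r ∧ N ≤ y) :=
    Finset.filter_congr (fun y _ => by rw [hiff y])
  have e2 : (betaSet lam N).filter (fun y => y % t = (r + 1) % t ∧ n ≤ y / t)
      = (betaSet lam N).filter (fun y => y % t = (r + 1) % t ∧ N ≤ y) :=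
    Finset.filter_congr (fun y _ => by rw [hiff y])
  rw [e1, e2]
  have hshift := AK.high_shift_orth hlam hasym hlen hwidth
  apply Finset.card_nbij' (i := fun x => x + 1) (j := fun y => y - 1)
  · intro x hx
    rw [Finset.mem_coe, Finset.mem_filter] at hx
    obtain ⟨hx1, hx2, hx3⟩ := hx
    have hximg : x ∈ ((betaSet lam N).filter (fun z => N ≤ z)).image (fun z => z - 1) := by
      rw [← hshift]; exact Finset.mem_filter.2 ⟨hx1, hx3⟩
    obtain ⟨y, hy, rfl⟩ := Finset.mem_image.1 hximg
    rw [Finset.mem_filter] at hy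
    have hy1 : 1 ≤ y := by omega
    beta_reduce
    rw [show y - 1 + 1 = y by omega]
    refine Finset.mem_filter.2 ⟨hy.1, ?_, hy.2⟩
    exact (AK.mod_pred_iff ht' hr hy1).1 hx2
  · intro y hy
    rw [Finset.mem_coe, Finset.mem_filter] at hy
    obtain ⟨hy1, hy2, hy3⟩ := hy
    have hymem : y - 1 ∈ (betaSet (conjP lam) N).filter (fun z => N ≤ z) := by
      rw [hshift]; exact Finset.mem_image.2 ⟨y, Finset.mem_filter.2 ⟨hy1, hy3⟩, rfl⟩
    rw [Finset.mem_filter] at hymem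
    refine Finset.mem_filter.2 ⟨hymem.1, ?_, hymem.2⟩
    exact (AK.mod_pred_iff ht' hr (by omega)).2 hy2
  · intro x hx
    beta_reduce
    omega
  · intro y hy
    rw [Finset.mem_coe, Finset.mem_filter] at hy
    beta_reduce
    omega

lemma AK.mu_high_symp {t n : ℕ} {lam : ℕ → ℕ} (ht : 2 ≤ t) (hn : 0 < n)
    (hlam : IsPartition lam) (hcore : IsTCore t lam) (hasym : ZAsymmetric 1 lam)
    (hlen : plen lam ≤ n * t) (hwidth : lam 0 ≤ n * t) {r : ℕ} (hr : r < t) :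
    ((betaSet (conjP lam) (n * t)).filter (fun y => y % t = r)).card - n
      = ((betaSet lam (n * t)).filter (fun y => y % t = (r + (t - 1)) % t)).card - n := by
  classical
  set N := n * t with hN
  have ht' : 0 < t := by omega
  have hNt : t ≤ N := by
    have h0 : 1 * t ≤ n * t := Nat.mul_le_mul_right t hn
    omega
  have hdownβ : ∀ x ∈ betaSet lam N, t ≤ x → x - t ∈ betaSet lam N :=
    fun x hx hxt => AK.core_down hlam hcore hlen hwidth hx hxt
  have hdownβ' : ∀ x ∈ betaSet (conjP lam) N, t ≤ x → x - t ∈ betaSet (conjP lam) N :=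
    fun x hx hxt => AK.conj_down hlam hcore hlen hwidth hx hxt
  have hr' : (r + (t - 1)) % t < t := Nat.mod_lt _ ht'
  have hc1 := AK.count_ge ht' _ hdownβ' hr n
  have hc2 := AK.count_ge ht' _ hdownβ hr' n
  rw [← hc1, ← hc2]
  have hiff : ∀ y : ℕ, (n ≤ y / t) ↔ N ≤ y := fun y => Nat.le_div_iff_mul_le ht'
  have e1 : (betaSet (conjP lam) N).filter (fun y => y % t = r ∧ n ≤ y / t)
      = (betaSet (conjP lam) N).filter (fun y => y % t = r ∧ N ≤ y) :=
    Finset.filter_congr (fun y _ => by rw [hiff y])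
  have e2 : (betaSet lam N).filter (fun y => y % t = (r + (t - 1)) % t ∧ n ≤ y / t)
      = (betaSet lam N).filter (fun y => y % t = (r + (t - 1)) % t ∧ N ≤ y) :=
    Finset.filter_congr (fun y _ => by rw [hiff y])
  rw [e1, e2]
  have hshift := AK.high_shift_symp hlam hasym hlen hwidth
  apply Finset.card_nbij' (i := fun x => x - 1) (j := fun y => y + 1)
  · intro x hx
    rw [Finset.mem_coe, Finset.mem_filter] at hx
    obtain ⟨hx1, hx2, hx3⟩ := hx
    have hximg : x ∈ ((betaSet lam N).filter (fun z => N ≤ z)).image (fun z => z + 1) := by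
      rw [← hshift]; exact Finset.mem_filter.2 ⟨hx1, hx3⟩
    obtain ⟨y, hy, rfl⟩ := Finset.mem_image.1 hximg
    rw [Finset.mem_filter] at hy
    beta_reduce
    rw [show y + 1 - 1 = y by omega]
    refine Finset.mem_filter.2 ⟨hy.1, ?_, hy.2⟩
    exact (AK.mod_succ_iff hr y).1 hx2
  · intro y hy
    rw [Finset.mem_coe, Finset.mem_filter] at hy
    obtain ⟨hy1, hy2, hy3⟩ := hy
    have hymem : y + 1 ∈ (betaSet (conjP lam) N).filter (fun z => N ≤ z) := by
      rw [hshift]; exact Finset.mem_image.2 ⟨y, Finset.mem_filter.2 ⟨hy1, hy3⟩, rfl⟩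
    rw [Finset.mem_filter] at hymem
    refine Finset.mem_filter.2 ⟨hymem.1, ?_, hymem.2⟩
    exact (AK.mod_succ_iff hr y).2 hy2
  · intro x hx
    rw [Finset.mem_coe, Finset.mem_filter] at hx
    beta_reduce
    omega
  · intro y hy
    beta_reduce
    omega

lemma AK.key_arith {t n d' : ℕ} (ht : 2 ≤ t) (hd' : d' = 1 ∨ d' = t - 1)
    (mu mu' : ℕ → ℕ)
    (hcompl : ∀ s, s < t → mu s + mu' (t - 1 - s) = 2 * n)
    (hhigh : ∀ r, r < t → mu' r - n = mu ((r + d') % t) - n) :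
    ∀ s, s < t → mu' s = mu ((s + d') % t) := by
  have e1 : ∀ s, s < t → mu (t - 1 - s) + mu' s = 2 * n := by
    intro s hs
    have h := hcompl (t - 1 - s) (by omega)
    rwa [show t - 1 - (t - 1 - s) = s by omega] at h
  rcases hd' with rfl | rfl
  · intro s hs
    rcases Nat.lt_or_ge s (t - 1) with hc | hc
    · have hmod1 : (s + 1) % t = s + 1 := Nat.mod_eq_of_lt (by omega)
      have hmod2 : (t - 2 - s + 1) % t = t - 1 - s := by
        rw [show t - 2 - s + 1 = t - 1 - s by omega]
        exact Nat.mod_eq_of_lt (by omega)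
      have f1 := e1 s hs
      have f2 := hhigh s hs
      have f3 := e1 (t - 2 - s) (by omega)
      rw [show t - 1 - (t - 2 - s) = s + 1 by omega] at f3
      have f4 := hhigh (t - 2 - s) (by omega)
      rw [hmod2] at f4
      rw [hmod1] at f2 ⊢
      omega
    · have hseq : s = t - 1 := by omega
      subst hseq
      have hmod1 : (t - 1 + 1) % t = 0 := by
        rw [show t - 1 + 1 = t by omega]; exact Nat.mod_self t
      have f1 := e1 (t - 1) (by omega)
      rw [show t - 1 - (t - 1) = 0 by omega] at f1
      have f2 := hhigh (t - 1) (by omega)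
      rw [hmod1] at f2 ⊢
      omega
  · intro s hs
    rcases Nat.eq_zero_or_pos s with rfl | hpos
    · have hmod1 : (0 + (t - 1)) % t = t - 1 := by
        rw [Nat.zero_add]; exact Nat.mod_eq_of_lt (by omega)
      have f1 := e1 0 (by omega)
      rw [show t - 1 - 0 = t - 1 by omega] at f1
      have f2 := hhigh 0 (by omega)
      rw [hmod1] at f2 ⊢
      omega
    · have hmod1 : (s + (t - 1)) % t = s - 1 := by
        rw [show s + (t - 1) = (s - 1) + t by omega, Nat.add_mod_right]
        exact Nat.mod_eq_of_lt (by omega)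
      have hmod2 : (t - s + (t - 1)) % t = t - 1 - s := by
        rw [show t - s + (t - 1) = (t - 1 - s) + t by omega, Nat.add_mod_right]
        exact Nat.mod_eq_of_lt (by omega)
      have f1 := e1 s hs
      have f2 := hhigh s hs
      rw [hmod1] at f2
      have f3 := e1 (t - s) (by omega)
      rw [show t - 1 - (t - s) = s - 1 by omega] at f3
      have f4 := hhigh (t - s) (by omega)
      rw [hmod2] at f4
      rw [hmod1]
      omega

end AuxProof6

section AuxProof7

open Finset

lemma AK.psi_mod {t : ℕ} (ht : 0 < t) (d x : ℕ) :
    (x / t * t + (x % t + d) % t) % t = (x % t + d) % t :=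
  AK.mul_add_mod' _ _ (Nat.mod_lt _ ht)

lemma AK.psi_div {t : ℕ} (ht : 0 < t) (d x : ℕ) :
    (x / t * t + (x % t + d) % t) / t = x / t :=
  AK.mul_add_div' ht _ _ (Nat.mod_lt _ ht)

lemma AK.psi_psi {t d d' : ℕ} (ht : 0 < t) (hdd : d + d' = t) (x : ℕ) :
    ((x / t * t + (x % t + d) % t) / t) * t
      + (((x / t * t + (x % t + d) % t) % t + d') % t) = x := by
  rw [AK.psi_div ht, AK.psi_mod ht, AK.mod_add_add hdd (Nat.mod_lt _ ht)]
  exact AK.div_mul_add_mod x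

lemma AK.psi_lt {t M d : ℕ} (ht : 0 < t) {x : ℕ} (hx : x < M * t) :
    x / t * t + (x % t + d) % t < M * t := by
  have h1 : x / t < M := (Nat.div_lt_iff_lt_mul ht).2 hx
  have h2 : (x % t + d) % t < t := Nat.mod_lt _ ht
  have h3 : (x / t + 1) * t ≤ M * t := Nat.mul_le_mul_right t (by omega)
  have h4 : (x / t + 1) * t = x / t * t + t := by ring
  omega

lemma AK.xor_orth {t : ℕ} (ht : 2 ≤ t) : ∀ r1 r2, r1 < t → r2 < t →
    (((r2 < r1 ∧ ¬((r2 + (t - 1)) % t < (r1 + (t - 1)) % t)) ∨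
      (((r2 + (t - 1)) % t < (r1 + (t - 1)) % t) ∧ ¬(r2 < r1)))
      ↔ ((r1 = 0) ↔ ¬(r2 = 0))) := by
  intro r1 r2 h1 h2
  have e : ∀ r, r < t → (r + (t - 1)) % t = if r = 0 then t - 1 else r - 1 := by
    intro r hr
    split_ifs with h
    · subst h; rw [Nat.zero_add]; exact Nat.mod_eq_of_lt (by omega)
    · rw [show r + (t - 1) = (r - 1) + t by omega, Nat.add_mod_right]
      exact Nat.mod_eq_of_lt (by omega)
  rw [e r1 h1, e r2 h2]
  split_ifs <;> omega

lemma AK.xor_symp {t : ℕ} (ht : 2 ≤ t) : ∀ r1 r2, r1 < t → r2 < t →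
    (((r2 < r1 ∧ ¬((r2 + 1) % t < (r1 + 1) % t)) ∨
      (((r2 + 1) % t < (r1 + 1) % t) ∧ ¬(r2 < r1)))
      ↔ ((r1 = t - 1) ↔ ¬(r2 = t - 1))) := by
  intro r1 r2 h1 h2
  have e : ∀ r, r < t → (r + 1) % t = if r = t - 1 then 0 else r + 1 := by
    intro r hr
    split_ifs with h
    · subst h; rw [show t - 1 + 1 = t by omega]; exact Nat.mod_self t
    · exact Nat.mod_eq_of_lt (by omega)
  rw [e r1 h1, e r2 h2]
  split_ifs <;> omega

end AuxProof7

section Endgame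

open Finset

lemma AK.endgame {t n : ℕ} {lam : ℕ → ℕ} (ht : 2 ≤ t) (hn : 0 < n)
    (hlam : IsPartition lam) (hcore : IsTCore t lam)
    (hlen : plen lam ≤ n * t) (hwidth : lam 0 ≤ n * t)
    {d d' r₀ : ℕ} (hdd : d + d' = t) (hr₀ : r₀ < t)
    (h1 : ∀ s, s < t →
      ((betaSet (conjP lam) (n * t)).filter (fun y => y % t = s)).card
        = ((betaSet lam (n * t)).filter (fun y => y % t = (s + d') % t)).card)
    (h2 : ((betaSet lam (n * t)).filter (fun y => y % t = r₀)).card = n)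
    (hXOR : ∀ r1 r2, r1 < t → r2 < t →
      (((r2 < r1 ∧ ¬((r2 + d) % t < (r1 + d) % t)) ∨
        (((r2 + d) % t < (r1 + d) % t) ∧ ¬(r2 < r1)))
        ↔ ((r1 = r₀) ↔ ¬(r2 = r₀)))) :
    sgnW t lam (n * t) * sgnW t (conjP lam) (n * t) = (-1 : ℤ) ^ rk lam := by
  classical
  have ht' : 0 < t := by omega
  set N := n * t with hN
  set β := betaSet lam N with hβ
  set β' := betaSet (conjP lam) N with hβ'
  have hlamN : ∀ i, lam i ≤ N := fun i => le_trans (hlam.1 (Nat.zero_le i)) hwidth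
  have hconjN : ∀ j, conjP lam j ≤ N := fun j => le_trans (AK.conj_le_plen hlam j) hlen
  have hβlt : ∀ x ∈ β, x < 2 * N := fun x hx => AK.beta_lt hlamN hx
  have hβ'lt : ∀ x ∈ β', x < 2 * N := fun x hx => AK.beta_lt hconjN hx
  have hdownβ : ∀ x ∈ β, t ≤ x → x - t ∈ β :=
    fun x hx hxt => AK.core_down hlam hcore hlen hwidth hx hxt
  have hdownβ' : ∀ x ∈ β', t ≤ x → x - t ∈ β' :=
    fun x hx hxt => AK.conj_down hlam hcore hlen hwidth hx hxt
  have hmemβ : ∀ x : ℕ, x ∈ β ↔ x / t < (β.filter (fun y => y % t = x % t)).card :=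
    fun x => AK.class_mem_iff ht' β hdownβ (Nat.mod_lt x ht') x rfl
  have hmemβ' : ∀ x : ℕ, x ∈ β' ↔ x / t < (β'.filter (fun y => y % t = x % t)).card :=
    fun x => AK.class_mem_iff ht' β' hdownβ' (Nat.mod_lt x ht') x rfl
  have h2N : 2 * N = (2 * n) * t := by rw [hN]; ring
  set U := Finset.range (2 * N) with hU
  set P := U ×ˢ U with hP
  set A := P.filter (fun p : ℕ × ℕ =>
    p.1 ∈ β ∧ p.2 ∈ β ∧ p.2 % t < p.1 % t ∧ p.2 / t ≤ p.1 / t) with hA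
  set A'' := P.filter (fun p : ℕ × ℕ =>
    p.1 ∈ β ∧ p.2 ∈ β ∧ (p.2 % t + d) % t < (p.1 % t + d) % t ∧ p.2 / t ≤ p.1 / t) with hA''
  set A' := P.filter (fun p : ℕ × ℕ =>
    p.1 ∈ β' ∧ p.2 ∈ β' ∧ p.2 % t < p.1 % t ∧ p.2 / t ≤ p.1 / t) with hA'
  -- identification of the two signs
  have hsgn1 : sgnW t lam N = (-1 : ℤ) ^ A.card := by
    have hset : (β ×ˢ β).filter (fun p : ℕ × ℕ => p.2 < p.1 ∧ p.2 % t < p.1 % t) = A := by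
      ext p
      rw [hA, Finset.mem_filter, Finset.mem_filter, Finset.mem_product, Finset.mem_product]
      constructor
      · rintro ⟨⟨hp1, hp2⟩, hlt, hmod⟩
        exact ⟨⟨Finset.mem_range.2 (hβlt _ hp1), Finset.mem_range.2 (hβlt _ hp2)⟩,
          hp1, hp2, hmod, (AK.lt_iff_div_le ht' hmod).1 hlt⟩
      · rintro ⟨hpU, hp1, hp2, hmod, hdiv⟩
        exact ⟨⟨hp1, hp2⟩, (AK.lt_iff_div_le ht' hmod).2 hdiv, hmod⟩
    unfold sgnW
    rw [← hβ, hset]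
  have hsgn2 : sgnW t (conjP lam) N = (-1 : ℤ) ^ A'.card := by
    have hset : (β' ×ˢ β').filter (fun p : ℕ × ℕ => p.2 < p.1 ∧ p.2 % t < p.1 % t) = A' := by
      ext p
      rw [hA', Finset.mem_filter, Finset.mem_filter, Finset.mem_product, Finset.mem_product]
      constructor
      · rintro ⟨⟨hp1, hp2⟩, hlt, hmod⟩
        exact ⟨⟨Finset.mem_range.2 (hβ'lt _ hp1), Finset.mem_range.2 (hβ'lt _ hp2)⟩,
          hp1, hp2, hmod, (AK.lt_iff_div_le ht' hmod).1 hlt⟩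
      · rintro ⟨hpU, hp1, hp2, hmod, hdiv⟩
        exact ⟨⟨hp1, hp2⟩, (AK.lt_iff_div_le ht' hmod).2 hdiv, hmod⟩
    unfold sgnW
    rw [← hβ', hset]
  -- membership transfer along the residue shift
  have hmemΨ : ∀ x : ℕ, (x / t * t + (x % t + d) % t ∈ β') ↔ x ∈ β := by
    intro x
    rw [hmemβ' (x / t * t + (x % t + d) % t), AK.psi_mod ht', AK.psi_div ht',
      h1 _ (Nat.mod_lt _ ht'), AK.mod_add_add hdd (Nat.mod_lt x ht'), ← hmemβ x]
  have hmemΨ' : ∀ y : ℕ, (y / t * t + (y % t + d') % t ∈ β) ↔ y ∈ β' := by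
    intro y
    have h3 := hmemΨ (y / t * t + (y % t + d') % t)
    rw [AK.psi_psi ht' (by omega : d' + d = t) y] at h3
    exact h3.symm
  -- |A'| = |A''|
  have hcardA' : A'.card = A''.card := by
    apply Finset.card_nbij'
      (i := fun p : ℕ × ℕ => (p.1 / t * t + (p.1 % t + d') % t, p.2 / t * t + (p.2 % t + d') % t))
      (j := fun p : ℕ × ℕ => (p.1 / t * t + (p.1 % t + d) % t, p.2 / t * t + (p.2 % t + d) % t))
    · intro p hp
      rw [Finset.mem_coe, hA', Finset.mem_filter, hP, Finset.mem_product, Finset.mem_range, Finset.mem_range] at hp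
      obtain ⟨⟨hu1, hu2⟩, hm1, hm2, hmod, hdiv⟩ := hp
      rw [Finset.mem_coe, hA'', Finset.mem_filter, hP, Finset.mem_product, Finset.mem_range, Finset.mem_range]
      rw [h2N] at hu1 hu2 ⊢
      refine ⟨⟨AK.psi_lt ht' hu1, AK.psi_lt ht' hu2⟩, (hmemΨ' _).2 hm1, (hmemΨ' _).2 hm2, ?_, ?_⟩
      · rw [AK.psi_mod ht', AK.psi_mod ht',
          AK.mod_add_add (by omega : d' + d = t) (Nat.mod_lt p.1 ht'),
          AK.mod_add_add (by omega : d' + d = t) (Nat.mod_lt p.2 ht')]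
        exact hmod
      · rw [AK.psi_div ht', AK.psi_div ht']
        exact hdiv
    · intro p hp
      rw [Finset.mem_coe, hA'', Finset.mem_filter, hP, Finset.mem_product, Finset.mem_range, Finset.mem_range] at hp
      obtain ⟨⟨hu1, hu2⟩, hm1, hm2, hmod, hdiv⟩ := hp
      rw [Finset.mem_coe, hA', Finset.mem_filter, hP, Finset.mem_product, Finset.mem_range, Finset.mem_range]
      rw [h2N] at hu1 hu2 ⊢
      refine ⟨⟨AK.psi_lt ht' hu1, AK.psi_lt ht' hu2⟩, (hmemΨ _).2 hm1, (hmemΨ _).2 hm2, ?_, ?_⟩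
      · rw [AK.psi_mod ht', AK.psi_mod ht']
        exact hmod
      · rw [AK.psi_div ht', AK.psi_div ht']
        exact hdiv
    · intro p hp
      obtain ⟨a, b⟩ := p
      simp only
      rw [AK.psi_psi ht' (by omega : d' + d = t) a, AK.psi_psi ht' (by omega : d' + d = t) b]
    · intro p hp
      obtain ⟨a, b⟩ := p
      simp only
      rw [AK.psi_psi ht' hdd a, AK.psi_psi ht' hdd b]
  -- symmetric difference
  set SD1 := P.filter (fun p : ℕ × ℕ =>
    p.1 ∈ β ∧ p.2 ∈ β ∧ p.2 / t ≤ p.1 / t ∧ ¬p.1 % t = r₀ ∧ p.2 % t = r₀) with hSD1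
  set SD2 := P.filter (fun p : ℕ × ℕ =>
    p.1 ∈ β ∧ p.2 ∈ β ∧ p.2 / t ≤ p.1 / t ∧ p.1 % t = r₀ ∧ ¬p.2 % t = r₀) with hSD2
  have huni : (A \ A'') ∪ (A'' \ A) = SD1 ∪ SD2 := by
    ext p
    have hx := hXOR (p.1 % t) (p.2 % t) (Nat.mod_lt _ ht') (Nat.mod_lt _ ht')
    rw [Finset.mem_union, Finset.mem_union, Finset.mem_sdiff, Finset.mem_sdiff,
      hA, hA'', hSD1, hSD2, Finset.mem_filter, Finset.mem_filter, Finset.mem_filter,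
      Finset.mem_filter]
    constructor
    · rintro (⟨⟨hpP, hm1, hm2, hc, hdv⟩, hnot⟩ | ⟨⟨hpP, hm1, hm2, hc, hdv⟩, hnot⟩)
      · have hnc : ¬((p.2 % t + d) % t < (p.1 % t + d) % t) :=
          fun hcc => hnot ⟨hpP, hm1, hm2, hcc, hdv⟩
        have hxor := hx.1 (Or.inl ⟨hc, hnc⟩)
        by_cases h01 : p.1 % t = r₀
        · exact Or.inr ⟨hpP, hm1, hm2, hdv, h01, hxor.1 h01⟩
        · have h02 : p.2 % t = r₀ := by
            by_contra h02
            exact h01 (hxor.2 h02)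
          exact Or.inl ⟨hpP, hm1, hm2, hdv, h01, h02⟩
      · have hnc : ¬(p.2 % t < p.1 % t) :=
          fun hcc => hnot ⟨hpP, hm1, hm2, hcc, hdv⟩
        have hxor := hx.1 (Or.inr ⟨hc, hnc⟩)
        by_cases h01 : p.1 % t = r₀
        · exact Or.inr ⟨hpP, hm1, hm2, hdv, h01, hxor.1 h01⟩
        · have h02 : p.2 % t = r₀ := by
            by_contra h02
            exact h01 (hxor.2 h02)
          exact Or.inl ⟨hpP, hm1, hm2, hdv, h01, h02⟩
    · rintro (⟨hpP, hm1, hm2, hdv, hne1, heq2⟩ | ⟨hpP, hm1, hm2, hdv, heq1, hne2⟩)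
      · have hxor : (p.1 % t = r₀) ↔ ¬(p.2 % t = r₀) :=
          ⟨fun hh => absurd hh hne1, fun hh => absurd heq2 hh⟩
        rcases hx.2 hxor with ⟨hc, hnc⟩ | ⟨hc, hnc⟩
        · exact Or.inl ⟨⟨hpP, hm1, hm2, hc, hdv⟩, fun hmem => hnc hmem.2.2.2.1⟩
        · exact Or.inr ⟨⟨hpP, hm1, hm2, hc, hdv⟩, fun hmem => hnc hmem.2.2.2.1⟩
      · have hxor : (p.1 % t = r₀) ↔ ¬(p.2 % t = r₀) :=
          ⟨fun _ => hne2, fun _ => heq1⟩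
        rcases hx.2 hxor with ⟨hc, hnc⟩ | ⟨hc, hnc⟩
        · exact Or.inl ⟨⟨hpP, hm1, hm2, hc, hdv⟩, fun hmem => hnc hmem.2.2.2.1⟩
        · exact Or.inr ⟨⟨hpP, hm1, hm2, hc, hdv⟩, fun hmem => hnc hmem.2.2.2.1⟩
  have hdisjSD : Disjoint SD1 SD2 := by
    rw [Finset.disjoint_left]
    intro p hp1 hp2
    rw [hSD1, Finset.mem_filter] at hp1
    rw [hSD2, Finset.mem_filter] at hp2
    tauto
  have hcards : (A \ A'').card + (A'' \ A).card = SD1.card + SD2.card := by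
    rw [← Finset.card_union_of_disjoint disjoint_sdiff_sdiff, huni,
      Finset.card_union_of_disjoint hdisjSD]
  -- counting SD1
  set Bs := β.filter (fun x => ¬x % t = r₀) with hBs
  have hSD1card : SD1.card = ∑ x ∈ Bs, min (x / t + 1) n := by
    rw [hSD1, hP, AK.card_filter_prod U U
      (fun x y => x ∈ β ∧ y ∈ β ∧ y / t ≤ x / t ∧ ¬x % t = r₀ ∧ y % t = r₀)]
    rw [← Finset.sum_subset (s₁ := Bs) (fun x hx => by
        rw [hU, Finset.mem_range]
        rw [hBs, Finset.mem_filter] at hx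
        exact hβlt x hx.1)
      (fun x hxU hxB => by
        rw [Finset.card_eq_zero, Finset.filter_eq_empty_iff]
        intro y hy
        rw [hBs, Finset.mem_filter] at hxB
        tauto)]
    refine Finset.sum_congr rfl fun x hx => ?_
    rw [hBs, Finset.mem_filter] at hx
    have hfil : U.filter (fun y => x ∈ β ∧ y ∈ β ∧ y / t ≤ x / t ∧ ¬x % t = r₀ ∧ y % t = r₀)
        = β.filter (fun y => y % t = r₀ ∧ y / t ≤ x / t) := by
      ext y
      rw [Finset.mem_filter, Finset.mem_filter, hU, Finset.mem_range]
      constructor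
      · rintro ⟨hyU, _, hyβ, hydiv, _, hymod⟩
        exact ⟨hyβ, hymod, hydiv⟩
      · rintro ⟨hyβ, hymod, hydiv⟩
        exact ⟨hβlt y hyβ, hx.1, hyβ, hydiv, hx.2, hymod⟩
    rw [hfil, AK.count_le ht' β hdownβ hr₀ (x / t), h2]
  have hSD2card : SD2.card = ∑ x ∈ Bs, (n - x / t) := by
    rw [hSD2, hP, AK.card_filter_prod' U U
      (fun x y => x ∈ β ∧ y ∈ β ∧ y / t ≤ x / t ∧ x % t = r₀ ∧ ¬y % t = r₀)]
    rw [← Finset.sum_subset (s₁ := Bs) (fun y hy => by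
        rw [hU, Finset.mem_range]
        rw [hBs, Finset.mem_filter] at hy
        exact hβlt y hy.1)
      (fun y hyU hyB => by
        rw [Finset.card_eq_zero, Finset.filter_eq_empty_iff]
        intro x hxm
        rw [hBs, Finset.mem_filter] at hyB
        tauto)]
    refine Finset.sum_congr rfl fun y hy => ?_
    rw [hBs, Finset.mem_filter] at hy
    have hfil : U.filter (fun x => x ∈ β ∧ y ∈ β ∧ y / t ≤ x / t ∧ x % t = r₀ ∧ ¬y % t = r₀)
        = β.filter (fun x => x % t = r₀ ∧ y / t ≤ x / t) := by
      ext x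
      rw [Finset.mem_filter, Finset.mem_filter, hU, Finset.mem_range]
      constructor
      · rintro ⟨hxU, hxβ, _, hxdiv, hxmod, _⟩
        exact ⟨hxβ, hxmod, hxdiv⟩
      · rintro ⟨hxβ, hxmod, hxdiv⟩
        exact ⟨hβlt x hxβ, hxβ, hy.1, hxdiv, hxmod, hy.2⟩
    rw [hfil, AK.count_ge ht' β hdownβ hr₀ (y / t), h2]
  -- the sum
  have hsum2 : SD1.card + SD2.card
      = n * Bs.card + (Bs.filter (fun x => x / t < n)).card := by
    rw [hSD1card, hSD2card, ← Finset.sum_add_distrib]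
    have hterm : ∀ x ∈ Bs, min (x / t + 1) n + (n - x / t)
        = n + (if x / t < n then 1 else 0) := by
      intro x _
      rcases Nat.lt_or_ge (x / t) n with h | h
      · rw [if_pos h, min_eq_left (by omega)]; omega
      · rw [if_neg (by omega), min_eq_right (by omega)]; omega
    rw [Finset.sum_congr rfl hterm, Finset.sum_add_distrib, Finset.sum_const,
      smul_eq_mul, mul_comm]
    congr 1
    exact (Finset.card_filter _ _).symm
  -- the rank
  have hrk : rk lam = (Bs.filter (fun x => ¬x / t < n)).card := by
    have h3 : (β.filter (fun x => N ≤ x)).card = rk lam := AK.rk_card hlam.1 hwidth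
    rw [← h3]
    congr 1
    rw [hBs, Finset.filter_filter]
    apply Finset.filter_congr
    intro x hx
    constructor
    · intro hNx
      have hdiv : n ≤ x / t := (Nat.le_div_iff_mul_le ht').2 hNx
      refine ⟨?_, by omega⟩
      intro hmod
      have h4 := (hmemβ x).1 hx
      rw [hmod, h2] at h4
      omega
    · rintro ⟨hmod, hdiv⟩
      exact (Nat.le_div_iff_mul_le ht').1 (by omega)
  -- cardinality of Bs
  have hBscard : Bs.card + n = N := by
    have h5 := Finset.card_filter_add_card_filter_not
      (s := β) (p := fun x => x % t = r₀)
    have hβcard : β.card = N := AK.beta_card hlam.1 N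
    rw [h2] at h5
    rw [hBs]
    omega
  have hC := Finset.card_filter_add_card_filter_not
    (s := Bs) (p := fun x => x / t < n)
  -- total parity
  have heven : Even (SD1.card + SD2.card + rk lam) := by
    obtain ⟨m, rfl⟩ : ∃ m, t = m + 2 := ⟨t - 2, by omega⟩
    have hBsval : Bs.card = n * (m + 1) := by
      have h9 : n * (m + 2) = n * (m + 1) + n := by ring
      rw [hN] at hBscard
      omega
    have htot : SD1.card + SD2.card + rk lam = (n + 1) * Bs.card := by
      have h10 : (n + 1) * Bs.card = n * Bs.card + Bs.card := by ring
      rw [hsum2, hrk]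
      omega
    rw [htot, hBsval, show (n + 1) * (n * (m + 1)) = (n * (n + 1)) * (m + 1) by ring]
    exact (Nat.even_mul_succ_self n).mul_right _
  -- conclusion
  rw [hsgn1, hsgn2, hcardA', ← pow_add]
  have e1 : A.card = (A \ A'').card + (A ∩ A'').card :=
    (Finset.card_sdiff_add_card_inter A A'').symm
  have e2 : A''.card = (A'' \ A).card + (A ∩ A'').card := by
    rw [Finset.inter_comm]
    exact (Finset.card_sdiff_add_card_inter A'' A).symm
  have e3 : A.card + A''.card
      = (SD1.card + SD2.card) + 2 * (A ∩ A'').card := by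
    rw [e1, e2, ← hcards]
    ring
  rw [e3, pow_add, pow_mul]
  norm_num
  have hiff := Nat.even_add.1 heven
  rcases Nat.even_or_odd (rk lam) with h | h
  · rw [Even.neg_one_pow (hiff.2 h), Even.neg_one_pow h]
  · have hS : Odd (SD1.card + SD2.card) := by
      rcases Nat.even_or_odd (SD1.card + SD2.card) with h' | h'
      · exact absurd (hiff.1 h') (Nat.not_even_iff_odd.mpr h)
      · exact h'
    rw [Odd.neg_one_pow hS, Odd.neg_one_pow h]

end Endgame


/-- **Lemma.** Let `λ` be an orthogonal or symplectic `t`-core whose diagram is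
contained in an `nt × nt` square.  Then
`sgn(w_t(λ;nt)) · sgn(w_t(λ';nt)) = (-1)^{rk(λ)}`. -/
theorem sgnW_mul_sgnW_conj (t n : ℕ) (ht : 2 ≤ t) (hn : 0 < n) (lam : ℕ → ℕ)
    (hlam : IsPartition lam) (hcore : IsTCore t lam)
    (hasym : ZAsymmetric (-1) lam ∨ ZAsymmetric 1 lam)
    (hlen : plen lam ≤ n * t) (hwidth : lam 0 ≤ n * t) :
    sgnW t lam (n * t) * sgnW t (conjP lam) (n * t) = (-1 : ℤ) ^ rk lam := by
  classical
  have ht' : 0 < t := by omega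
  set Mu : ℕ → ℕ := fun r => ((betaSet lam (n * t)).filter (fun y => y % t = r)).card
    with hMu
  set Mu' : ℕ → ℕ := fun r => ((betaSet (conjP lam) (n * t)).filter (fun y => y % t = r)).card
    with hMu'
  have hcompl : ∀ s, s < t → Mu s + Mu' (t - 1 - s) = 2 * n :=
    fun s hs => AK.mu_compl ht' hlam hlen hwidth hs
  rcases hasym with hO | hS
  · -- orthogonal case: d' = 1, d = t - 1, r₀ = 0
    have hhigh : ∀ r, r < t → Mu' r - n = Mu ((r + 1) % t) - n :=
      fun r hr => AK.mu_high_orth ht hn hlam hcore hO hlen hwidth hr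
    have h1 := AK.key_arith ht (Or.inl rfl) Mu Mu' hcompl hhigh
    have h2 : Mu 0 = n := by
      have ha := h1 (t - 1) (by omega)
      rw [show (t - 1 + 1) % t = 0 by
        rw [show t - 1 + 1 = t by omega]; exact Nat.mod_self t] at ha
      have hb := hcompl 0 (by omega)
      rw [show t - 1 - 0 = t - 1 by omega] at hb
      omega
    exact AK.endgame ht hn hlam hcore hlen hwidth
      (by omega : (t - 1) + 1 = t) (by omega : (0 : ℕ) < t) h1 h2 (AK.xor_orth ht)
  · -- symplectic case: d' = t - 1, d = 1, r₀ = t - 1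
    have hhigh : ∀ r, r < t → Mu' r - n = Mu ((r + (t - 1)) % t) - n :=
      fun r hr => AK.mu_high_symp ht hn hlam hcore hS hlen hwidth hr
    have h1 := AK.key_arith ht (Or.inr rfl) Mu Mu' hcompl hhigh
    have h2 : Mu (t - 1) = n := by
      have ha := h1 0 (by omega)
      rw [show (0 + (t - 1)) % t = t - 1 by
        rw [Nat.zero_add]; exact Nat.mod_eq_of_lt (by omega)] at ha
      have hb := hcompl (t - 1) (by omega)
      rw [show t - 1 - (t - 1) = 0 by omega] at hb
      omega
    exact AK.endgame ht hn hlam hcore hlen hwidth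
      (by omega : 1 + (t - 1) = t) (by omega : t - 1 < t) h1 h2 (AK.xor_symp ht)


end
end

section
/- For any partition λ, the identity rs_{λ,λ} = so_λ · so^−_λ holds in the ring of symmetric functions. -/
open scoped BigOperators

noncomputable section

/-- Block determinant factorisation: `det [[A,B],[B,A]] = det(A+B) · det(A−B)`. -/
lemma det_fromBlocks_same {R : Type*} [CommRing R] {n : ℕ}
    (A B : Matrix (Fin n) (Fin n) R) :
    (Matrix.fromBlocks A B B A).det = (A + B).det * (A - B).det := by
  have h : Matrix.fromBlocks A B B A =
      Matrix.fromBlocks 1 0 1 1 * Matrix.fromBlocks (A + B) B 0 (A - B) *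
        Matrix.fromBlocks 1 0 (-1) 1 := by
    simp [Matrix.fromBlocks_multiply, Matrix.mul_one, Matrix.one_mul]
  rw [h, Matrix.det_mul, Matrix.det_mul, Matrix.det_fromBlocks_zero₁₂,
    Matrix.det_fromBlocks_zero₂₁, Matrix.det_fromBlocks_zero₁₂]
  simp

/-- **Theorem (Ciucu–Krattenthaler, Ayyer–Behrend; universal form).**
`rs_{λ,λ} = so_λ · so⁻_λ` in the ring of symmetric functions. -/
theorem rs_eq_so_mul_soMinus (lam : ℕ → ℕ) (hlam : IsPartition lam) :
    rsP lam lam = soU lam * soMinusU lam := by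
  rw [rsP, rsN, det_fromBlocks_same, soU, soMinusU]
  congr 1

end
end

section
/- Let λ be a partition of length at most n+1. Then rs_{(λ_1+1,…,λ_n+1),(λ_2,…,λ_{n+1})} + rs_{(λ_1,…,λ_{n+1}),(λ_2+1,…,λ_n+1)} = so_{(λ_1+1,…,λ_n+1)} · so^−_{(λ_2,…,λ_{n+1})} in the ring of symmetric functions. -/
open scoped BigOperators

noncomputable section

namespace ABaux

open Matrix Equiv Sum

lemma hh_of_neg {r : ℤ} (h : r < 0) : hh r = 0 := by simp [hh, h]

lemma hh_zero : hh 0 = 1 := by simp [hh]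

/-- `half` of the coefficient ring. -/
noncomputable def half : SymF := MvPolynomial.C (1/2 : ℚ)

lemma half_add_half : half + half = 1 := by
  rw [half, ← map_add]; norm_num

lemma half_mul_two : half * 2 = 1 := by
  rw [mul_two, half_add_half]

section Main

variable (lam : ℕ → ℕ) (k : ℕ)

/-- shifted part `λ_i - i` (0-indexed). -/
def pI (x : ℕ) : ℤ := (lam x : ℤ) - x

/-- symmetric combination. -/
noncomputable def Ft (x j : ℕ) : SymF := hh (pI lam x + j + 1) + hh (pI lam x - j)

/-- antisymmetric combination. -/
noncomputable def Gt (x j : ℕ) : SymF := hh (pI lam x + j + 1) - hh (pI lam x - j)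

noncomputable def FP : Matrix (Fin (k+1)) (Fin (k+1)) SymF := .of fun i j => Ft lam i j
noncomputable def GP : Matrix (Fin (k+1)) (Fin (k+1)) SymF := .of fun i j => Gt lam i j
noncomputable def FQ : Matrix (Fin (k+1)) (Fin (k+1)) SymF := .of fun i j => Ft lam (i+1) j
noncomputable def GQ : Matrix (Fin (k+1)) (Fin (k+1)) SymF := .of fun i j => Gt lam (i+1) j

/-- the column-pairing matrix. -/
noncomputable def T : Matrix (Fin (k+1) ⊕ Fin (k+1)) (Fin (k+1) ⊕ Fin (k+1)) SymF :=
  fromBlocks 1 1 1 (-1)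

lemma det_T : (T k).det = (-2 : SymF)^(k+1) := by
  have hbr : (1 : Matrix (Fin (k+1)) (Fin (k+1)) SymF) + -((2 : SymF) • 1) = -1 := by
    refine Matrix.ext fun i j => ?_
    by_cases h : i = j <;>
      simp [Matrix.one_apply, h] <;> norm_num
  have hfac : fromBlocks (1 : Matrix (Fin (k+1)) (Fin (k+1)) SymF) 0 1 1 *
      fromBlocks 1 1 0 (-((2 : SymF) • 1)) = T k := by
    rw [fromBlocks_multiply]
    unfold T
    simp only [Matrix.one_mul, Matrix.mul_one, Matrix.mul_zero, Matrix.zero_mul,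
      add_zero, zero_add]
    try rw [hbr]
  rw [← hfac, det_mul, det_fromBlocks_zero₁₂, det_fromBlocks_zero₂₁]
  rw [show -((2 : SymF) • (1 : Matrix (Fin (k+1)) (Fin (k+1)) SymF)) = (-2 : SymF) • 1 from
    (neg_smul (2 : SymF) (1 : Matrix (Fin (k+1)) (Fin (k+1)) SymF)).symm, det_smul]
  simp [Fintype.card_fin]

/-- the matrix of the first `rs` function. -/
noncomputable def M1 : Matrix (Fin (k+1) ⊕ Fin (k+1)) (Fin (k+1) ⊕ Fin (k+1)) SymF :=
  fromBlocks (.of fun i j => hh (pI lam i + j + 1)) (.of fun i j => hh (pI lam i - j))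
    (.of fun i j => hh (pI lam (i+1) - j)) (.of fun i j => hh (pI lam (i+1) + j + 1))

lemma rs1_eq :
    rsN (k+1) (k+1) (fun i => (lam i : ℤ) + 1) (fun i => (lam (i + 1) : ℤ)) =
      (M1 lam k).det := by
  unfold rsN M1
  congr 1
  refine Matrix.ext fun i j => ?_
  rcases i with i | i <;> rcases j with j | j <;>
    simp only [fromBlocks_apply₁₁, fromBlocks_apply₁₂, fromBlocks_apply₂₁,
      fromBlocks_apply₂₂, Matrix.of_apply, pI] <;> congr 1 <;> omega

/-- the matrix of the second `rs` function. -/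
noncomputable def M2 : Matrix (Fin (k+2) ⊕ Fin k) (Fin (k+2) ⊕ Fin k) SymF :=
  fromBlocks (.of fun i j => hh (pI lam i + j)) (.of fun i j => hh (pI lam i - j - 1))
    (.of fun i j => hh (pI lam (i+1) + 1 - j)) (.of fun i j => hh (pI lam (i+1) + j + 2))

lemma rs2_eq :
    rsN (k+2) k (fun i => (lam i : ℤ)) (fun i => (lam (i + 1) : ℤ) + 1) =
      (M2 lam k).det := by
  unfold rsN M2
  congr 1
  refine Matrix.ext fun i j => ?_
  rcases i with i | i <;> rcases j with j | j <;>
    simp only [fromBlocks_apply₁₁, fromBlocks_apply₁₂, fromBlocks_apply₂₁,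
      fromBlocks_apply₂₂, Matrix.of_apply, pI] <;> congr 1 <;> omega

/-- row-relabelling equivalence. -/
def fEq : (Fin (k+1) ⊕ Fin (k+1)) ≃ (Fin (k+2) ⊕ Fin k) where
  toFun := Sum.elim (fun i => Sum.inl i.castSucc)
    (fun i => Fin.lastCases (Sum.inl (Fin.last (k+1))) (fun i' => Sum.inr i') i)
  invFun := Sum.elim (fun m => Fin.lastCases (Sum.inr (Fin.last k)) (fun m' => Sum.inl m') m)
    (fun j => Sum.inr j.castSucc)
  left_inv := by
    rintro (i | i)
    · simp
    · induction i using Fin.lastCases <;> simp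
  right_inv := by
    rintro (m | j)
    · induction m using Fin.lastCases <;> simp
    · simp

/-- column-relabelling equivalence. -/
def gEq : (Fin (k+1) ⊕ Fin (k+1)) ≃ (Fin (k+2) ⊕ Fin k) where
  toFun := Sum.elim (fun i => Sum.inl i.succ)
    (fun j => Fin.cases (Sum.inl 0) (fun j' => Sum.inr j') j)
  invFun := Sum.elim (fun m => Fin.cases (Sum.inr 0) (fun m' => Sum.inl m') m)
    (fun j => Sum.inr j.succ)
  left_inv := by
    rintro (i | j)
    · simp
    · induction j using Fin.cases <;> simp
  right_inv := by
    rintro (m | j)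
    · induction m using Fin.cases <;> simp
    · simp

/-- The rearranged second matrix. -/
noncomputable def N2 : Matrix (Fin (k+1) ⊕ Fin (k+1)) (Fin (k+1) ⊕ Fin (k+1)) SymF :=
  fromBlocks (.of fun i j => hh (pI lam i + j + 1)) (.of fun i j => hh (pI lam i - j))
    (.of fun i j => if (i : ℕ) < k then hh (pI lam (i+1) - j) else hh (pI lam (i+1) + j + 1))
    (.of fun i j => if (i : ℕ) < k then hh (pI lam (i+1) + j + 1) else hh (pI lam (i+1) - j))

lemma N2_eq : (M2 lam k).submatrix (fEq k) (gEq k) = N2 lam k := by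
  refine Matrix.ext fun i j => ?_
  rcases i with i | i <;> rcases j with j | j
  · simp only [Matrix.submatrix_apply, fEq, gEq, Equiv.coe_fn_mk, Sum.elim_inl, M2, N2,
      fromBlocks_apply₁₁, Matrix.of_apply, pI, Fin.coe_castSucc, Fin.val_succ]
    congr 1; omega
  · induction j using Fin.cases with
    | zero =>
      simp only [Matrix.submatrix_apply, fEq, gEq, Equiv.coe_fn_mk, Sum.elim_inl,
        Sum.elim_inr, Fin.cases_zero, M2, N2, fromBlocks_apply₁₁, fromBlocks_apply₁₂,
        Matrix.of_apply, pI, Fin.coe_castSucc, Fin.val_zero]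
      try (congr 1; try omega; try simp)
    | succ j' =>
      simp only [Matrix.submatrix_apply, fEq, gEq, Equiv.coe_fn_mk, Sum.elim_inl,
        Sum.elim_inr, Fin.cases_succ, M2, N2, fromBlocks_apply₁₂, Matrix.of_apply, pI,
        Fin.coe_castSucc, Fin.val_succ]
      try (congr 1; try omega; try simp)
  · induction i using Fin.lastCases with
    | last =>
      simp only [Matrix.submatrix_apply, fEq, gEq, Equiv.coe_fn_mk, Sum.elim_inl,
        Sum.elim_inr, Fin.lastCases_last, M2, N2, fromBlocks_apply₁₁, fromBlocks_apply₂₁,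
        Matrix.of_apply, pI, Fin.val_last, Fin.val_succ, lt_irrefl, if_false, if_neg]
      congr 1; omega
    | cast i' =>
      simp only [Matrix.submatrix_apply, fEq, gEq, Equiv.coe_fn_mk, Sum.elim_inl,
        Sum.elim_inr, Fin.lastCases_castSucc, M2, N2, fromBlocks_apply₂₁,
        Matrix.of_apply, pI, Fin.coe_castSucc, Fin.val_succ, Fin.is_lt, if_true, if_pos]
      try (congr 1; try omega; try simp)
  · induction i using Fin.lastCases with
    | last =>
      induction j using Fin.cases with
      | zero =>
        simp only [Matrix.submatrix_apply, fEq, gEq, Equiv.coe_fn_mk, Sum.elim_inl,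
          Sum.elim_inr, Fin.lastCases_last, Fin.cases_zero, M2, N2, fromBlocks_apply₁₁,
          fromBlocks_apply₂₂, Matrix.of_apply, pI, Fin.val_last, Fin.val_zero,
          lt_irrefl, if_false, if_neg]
        try (congr 1; try omega; try simp)
      | succ j' =>
        simp only [Matrix.submatrix_apply, fEq, gEq, Equiv.coe_fn_mk, Sum.elim_inl,
          Sum.elim_inr, Fin.lastCases_last, Fin.cases_succ, M2, N2, fromBlocks_apply₁₂,
          fromBlocks_apply₂₂, Matrix.of_apply, pI, Fin.val_last, Fin.val_succ,
          lt_irrefl, if_false, if_neg]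
        try (congr 1; try omega; try simp)
    | cast i' =>
      induction j using Fin.cases with
      | zero =>
        simp only [Matrix.submatrix_apply, fEq, gEq, Equiv.coe_fn_mk, Sum.elim_inl,
          Sum.elim_inr, Fin.lastCases_castSucc, Fin.cases_zero, M2, N2,
          fromBlocks_apply₂₁, fromBlocks_apply₂₂, Matrix.of_apply, pI,
          Fin.coe_castSucc, Fin.val_zero, Fin.is_lt, if_true, if_pos]
        congr 1; omega
      | succ j' =>
        simp only [Matrix.submatrix_apply, fEq, gEq, Equiv.coe_fn_mk, Sum.elim_inl,
          Sum.elim_inr, Fin.lastCases_castSucc, Fin.cases_succ, M2, N2,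
          fromBlocks_apply₂₂, Matrix.of_apply, pI, Fin.coe_castSucc, Fin.val_succ,
          Fin.is_lt, if_true, if_pos]
        try (congr 1; try omega; try simp)

lemma csucc_add_one (j : Fin k) : (j.castSucc : Fin (k+1)) + 1 = j.succ :=
  Fin.coeSucc_eq_succ

lemma pi_eq : (fEq k).trans (gEq k).symm =
    Equiv.swap (Sum.inl (Fin.last k)) (Sum.inr (0 : Fin (k+1))) *
      Equiv.sumCongr ((finRotate (k+1))⁻¹) (finRotate (k+1)) := by
  have hr0 : (finRotate (k+1))⁻¹ (0 : Fin (k+1)) = Fin.last k := by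
    rw [Equiv.Perm.inv_def, Equiv.symm_apply_eq, finRotate_succ_apply, Fin.last_add_one]
  have hrs : ∀ j : Fin k, (finRotate (k+1))⁻¹ j.succ = j.castSucc := by
    intro j
    rw [Equiv.Perm.inv_def, Equiv.symm_apply_eq, finRotate_succ_apply, Fin.coeSucc_eq_succ]
  ext x
  rcases x with i | i
  · induction i using Fin.cases with
    | zero =>
      simp only [Equiv.trans_apply, Equiv.Perm.mul_apply, Equiv.sumCongr_apply,
        Sum.map_inl, Sum.map_inr, hr0, fEq, gEq, Equiv.coe_fn_mk, Equiv.coe_fn_symm_mk,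
        Sum.elim_inl, Fin.castSucc_zero, Fin.cases_zero, Equiv.swap_apply_left]
    | succ i' =>
      have h1 : (fEq k) (Sum.inl i'.succ) = Sum.inl i'.succ.castSucc := rfl
      have h2 : (gEq k).symm (Sum.inl i'.succ.castSucc) = Sum.inl i'.castSucc := by
        have : i'.succ.castSucc = (i'.castSucc).succ := (Fin.succ_castSucc i').symm
        rw [this]
        simp [gEq]
      simp only [Equiv.trans_apply, h1, h2, Equiv.Perm.mul_apply, Equiv.sumCongr_apply,
        Sum.map_inl, hrs]
      rw [Equiv.swap_apply_of_ne_of_ne]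
      · exact fun hc => (Fin.castSucc_lt_last i').ne (Sum.inl.inj hc)
      · exact Sum.inl_ne_inr
  · induction i using Fin.lastCases with
    | last =>
      have h1 : (fEq k) (Sum.inr (Fin.last k)) = Sum.inl (Fin.last (k+1)) := by
        simp [fEq]
      have h2 : (gEq k).symm (Sum.inl (Fin.last (k+1))) = Sum.inl (Fin.last k) := by
        rw [show Fin.last (k+1) = (Fin.last k).succ from (Fin.succ_last k).symm]
        simp only [gEq, Equiv.coe_fn_symm_mk, Sum.elim_inl, Fin.cases_succ]
      simp only [Equiv.trans_apply, h1, h2, Equiv.Perm.mul_apply, Equiv.sumCongr_apply,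
        Sum.map_inr, finRotate_succ_apply, Fin.last_add_one, Equiv.swap_apply_right]
    | cast i' =>
      have h1 : (fEq k) (Sum.inr i'.castSucc) = Sum.inr i' := by
        simp [fEq]
      have h2 : (gEq k).symm (Sum.inr i') = Sum.inr i'.succ := rfl
      simp only [Equiv.trans_apply, h1, h2, Equiv.Perm.mul_apply, Equiv.sumCongr_apply,
        Sum.map_inr, finRotate_succ_apply, Fin.coeSucc_eq_succ]
      rw [Equiv.swap_apply_of_ne_of_ne]
      · exact Sum.inr_ne_inl
      · exact fun hc => (Fin.succ_ne_zero i') (Sum.inr.inj hc)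

lemma sign_pi : Equiv.Perm.sign ((fEq k).trans (gEq k).symm) = -1 := by
  rw [pi_eq, Equiv.Perm.sign_mul, Equiv.Perm.sign_swap (by simp), Equiv.Perm.sign_sumCongr,
    Equiv.Perm.sign_inv, sign_finRotate]
  rw [← mul_pow]
  norm_num

lemma det_M2 : (M2 lam k).det = -(N2 lam k).det := by
  have hcomp : (⇑(gEq k) ∘ ⇑((fEq k).trans (gEq k).symm)) = ⇑(fEq k) := by
    funext x
    simp only [Function.comp_apply, Equiv.trans_apply, Equiv.apply_symm_apply]
  have hsub : N2 lam k = ((M2 lam k).submatrix (gEq k) (gEq k)).submatrix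
      (⇑((fEq k).trans (gEq k).symm)) id := by
    rw [Matrix.submatrix_submatrix, hcomp, Function.comp_id, ← N2_eq lam k]
  have hperm := Matrix.det_permute ((fEq k).trans (gEq k).symm)
    ((M2 lam k).submatrix (gEq k) (gEq k))
  rw [← hsub, Matrix.det_submatrix_equiv_self, sign_pi] at hperm
  rw [hperm]
  simp

lemma M1T : M1 lam k * T k = fromBlocks (FP lam k) (GP lam k) (FQ lam k) (-(GQ lam k)) := by
  unfold M1 T
  rw [fromBlocks_multiply]
  simp only [Matrix.mul_one, Matrix.mul_neg]
  have e1 : (Matrix.of fun i j : Fin (k+1) => hh (pI lam i + j + 1)) +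
      (Matrix.of fun i j : Fin (k+1) => hh (pI lam i - j)) = FP lam k := by
    refine Matrix.ext fun i j => ?_
    simp [FP, Ft]
  have e2 : (Matrix.of fun i j : Fin (k+1) => hh (pI lam i + j + 1)) +
      -(Matrix.of fun i j : Fin (k+1) => hh (pI lam i - j)) = GP lam k := by
    refine Matrix.ext fun i j => ?_
    simp [GP, Gt, sub_eq_add_neg]
  have e3 : (Matrix.of fun i j : Fin (k+1) => hh (pI lam (i+1) - j)) +
      (Matrix.of fun i j : Fin (k+1) => hh (pI lam (i+1) + j + 1)) = FQ lam k := by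
    refine Matrix.ext fun i j => ?_
    simp [FQ, Ft]
    try ring
  have e4 : (Matrix.of fun i j : Fin (k+1) => hh (pI lam (i+1) - j)) +
      -(Matrix.of fun i j : Fin (k+1) => hh (pI lam (i+1) + j + 1)) = -(GQ lam k) := by
    refine Matrix.ext fun i j => ?_
    simp [GQ, Gt, sub_eq_add_neg]
    try ring
  rw [e1, e2, e3, e4]

/-- lower-right block of the rearranged second matrix after column pairing. -/
noncomputable def GQ' : Matrix (Fin (k+1)) (Fin (k+1)) SymF :=
  .of fun i j => if (i : ℕ) < k then -(Gt lam (i+1) j) else Gt lam (i+1) j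

lemma N2T : N2 lam k * T k = fromBlocks (FP lam k) (GP lam k) (FQ lam k) (GQ' lam k) := by
  unfold N2 T
  rw [fromBlocks_multiply]
  simp only [Matrix.mul_one, Matrix.mul_neg]
  have e1 : (Matrix.of fun i j : Fin (k+1) => hh (pI lam i + j + 1)) +
      (Matrix.of fun i j : Fin (k+1) => hh (pI lam i - j)) = FP lam k := by
    refine Matrix.ext fun i j => ?_
    simp [FP, Ft]
  have e2 : (Matrix.of fun i j : Fin (k+1) => hh (pI lam i + j + 1)) +
      -(Matrix.of fun i j : Fin (k+1) => hh (pI lam i - j)) = GP lam k := by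
    refine Matrix.ext fun i j => ?_
    simp [GP, Gt, sub_eq_add_neg]
  have e3 : (Matrix.of fun i j : Fin (k+1) =>
        if (i : ℕ) < k then hh (pI lam (i+1) - j) else hh (pI lam (i+1) + j + 1)) +
      (Matrix.of fun i j : Fin (k+1) =>
        if (i : ℕ) < k then hh (pI lam (i+1) + j + 1) else hh (pI lam (i+1) - j)) =
      FQ lam k := by
    refine Matrix.ext fun i j => ?_
    by_cases h : (i : ℕ) < k <;> simp [FQ, Ft, h] <;> try ring
  have e4 : (Matrix.of fun i j : Fin (k+1) =>
        if (i : ℕ) < k then hh (pI lam (i+1) - j) else hh (pI lam (i+1) + j + 1)) +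
      -(Matrix.of fun i j : Fin (k+1) =>
        if (i : ℕ) < k then hh (pI lam (i+1) + j + 1) else hh (pI lam (i+1) - j)) =
      GQ' lam k := by
    refine Matrix.ext fun i j => ?_
    by_cases h : (i : ℕ) < k <;> simp [GQ', Gt, h, sub_eq_add_neg] <;> try ring
  rw [e1, e2, e3, e4]

noncomputable def dX : Fin (k+1) → SymF := fun i => if (i : ℕ) = 0 then 1 else 2
noncomputable def dZ : Fin (k+1) → SymF := fun i => if (i : ℕ) < k then -1 else -2

noncomputable def X2 : Matrix (Fin (k+1)) (Fin (k+1)) SymF := diagonal (dX k) * FP lam k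
noncomputable def Z2 : Matrix (Fin (k+1)) (Fin (k+1)) SymF := diagonal (dZ k) * GQ lam k
noncomputable def Y2 : Matrix (Fin (k+1)) (Fin (k+1)) SymF :=
  .of fun i j => if (i : ℕ) = 0 then Gt lam 0 j else 0
noncomputable def Clow : Matrix (Fin (k+1)) (Fin (k+1)) SymF :=
  .of fun i j => if (i : ℕ) < k then FQ lam k i j else 0

/-- the matrix appearing as the difference of the two determinants. -/
noncomputable def B3 : Matrix (Fin (k+1) ⊕ Fin (k+1)) (Fin (k+1) ⊕ Fin (k+1)) SymF :=
  fromBlocks (FP lam k) (GP lam k) (Clow lam k) (Z2 lam k)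

/-- block-triangular version of `B3`. -/
noncomputable def B5 : Matrix (Fin (k+1) ⊕ Fin (k+1)) (Fin (k+1) ⊕ Fin (k+1)) SymF :=
  fromBlocks (X2 lam k) (Y2 lam k) 0 (Z2 lam k)

/-- the row-operation matrix. -/
noncomputable def Lm : Matrix (Fin (k+1) ⊕ Fin (k+1)) (Fin (k+1) ⊕ Fin (k+1)) SymF :=
  fromBlocks (diagonal fun i => if (i : ℕ) = 0 then 1 else half)
    (.of fun i j => if (i : ℕ) = (j : ℕ) + 1 then -1 else 0)
    (.of fun i j => if (i : ℕ) + 1 = (j : ℕ) then half else 0) 1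

lemma split_det :
    (M1 lam k * T k).det = (B3 lam k).det + (N2 lam k * T k).det := by
  rw [M1T, N2T]
  have hlt : ∀ i : Fin (k+1), i ≠ Fin.last k → (i : ℕ) < k := by
    intro i hne
    have h1 : (i : ℕ) < k + 1 := i.isLt
    have h2 : (i : ℕ) ≠ k := fun hc => hne (Fin.ext (by simp [Fin.val_last, hc]))
    omega
  have hrow : fromBlocks (FP lam k) (GP lam k) (FQ lam k) (-(GQ lam k)) =
      (fromBlocks (FP lam k) (GP lam k) (FQ lam k) (GQ' lam k)).updateRow
        (Sum.inr (Fin.last k))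
        ((Sum.elim (fun _ => (0:SymF)) fun j : Fin (k+1) => (-2) * Gt lam (k+1) j) +
          fromBlocks (FP lam k) (GP lam k) (FQ lam k) (GQ' lam k) (Sum.inr (Fin.last k))) := by
    refine Matrix.ext fun i j => ?_
    rw [Matrix.updateRow_apply]
    by_cases h : i = Sum.inr (Fin.last k)
    · subst h
      rw [if_pos rfl]
      rcases j with j | j
      · simp
      · simp only [Pi.add_apply, Sum.elim_inr, fromBlocks_apply₂₂, Matrix.neg_apply,
          GQ, GQ', Matrix.of_apply, Fin.val_last, lt_irrefl, if_false]
        ring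
    · rw [if_neg h]
      rcases i with i | i
      · rfl
      · have hik : (i : ℕ) < k := hlt i (fun hc => h (by rw [hc]))
        rcases j with j | j
        · rfl
        · simp only [fromBlocks_apply₂₂, Matrix.neg_apply, GQ, GQ', Matrix.of_apply,
            hik, if_true]
  rw [hrow, Matrix.det_updateRow_add]
  congr 1
  · congr 1
    refine Matrix.ext fun i j => ?_
    rw [Matrix.updateRow_apply]
    by_cases h : i = Sum.inr (Fin.last k)
    · subst h
      rw [if_pos rfl]
      rcases j with j | j
      · simp [B3, Clow]
      · simp only [Sum.elim_inr, B3, fromBlocks_apply₂₂, Z2, Matrix.diagonal_mul,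
          dZ, GQ, Matrix.of_apply, Fin.val_last, lt_irrefl, if_false]
        try ring
    · rw [if_neg h]
      rcases i with i | i
      · rfl
      · have hik : (i : ℕ) < k := hlt i (fun hc => h (by rw [hc]))
        rcases j with j | j
        · simp only [fromBlocks_apply₂₁, B3, Clow, Matrix.of_apply, hik, if_true]
        · simp only [fromBlocks_apply₂₂, B3, Z2, Matrix.diagonal_mul, dZ, GQ', GQ,
            Matrix.of_apply, hik, if_true]
          ring
  · rw [Matrix.updateRow_eq_self]

lemma L12_mul_succ (M : Matrix (Fin (k+1)) (Fin (k+1)) SymF) (i : Fin k) (j : Fin (k+1)) :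
    ((Matrix.of fun a b : Fin (k+1) => if (a:ℕ) = (b:ℕ)+1 then (-1:SymF) else 0) * M)
      i.succ j = -(M i.castSucc j) := by
  rw [Matrix.mul_apply, Finset.sum_eq_single i.castSucc]
  · rw [Matrix.of_apply, if_pos (by simp [Fin.val_succ]), neg_one_mul]
  · intro m _ hm
    have hcond : ¬(((i.succ : Fin (k+1)) : ℕ) = (m:ℕ)+1) := by
      simp only [Fin.val_succ]
      intro hc
      exact hm (Fin.ext (by simp only [Fin.coe_castSucc]; omega))
    rw [Matrix.of_apply, if_neg hcond, zero_mul]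
  · intro hmem; exact absurd (Finset.mem_univ _) hmem

lemma L12_mul_zero (M : Matrix (Fin (k+1)) (Fin (k+1)) SymF) (j : Fin (k+1)) :
    ((Matrix.of fun a b : Fin (k+1) => if (a:ℕ) = (b:ℕ)+1 then (-1:SymF) else 0) * M)
      0 j = 0 := by
  rw [Matrix.mul_apply]
  apply Finset.sum_eq_zero
  intro m _
  simp

lemma L21_mul_cast (M : Matrix (Fin (k+1)) (Fin (k+1)) SymF) (i : Fin k) (j : Fin (k+1)) :
    ((Matrix.of fun a b : Fin (k+1) => if (a:ℕ)+1 = (b:ℕ) then half else 0) * M)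
      i.castSucc j = half * M i.succ j := by
  rw [Matrix.mul_apply, Finset.sum_eq_single i.succ]
  · rw [Matrix.of_apply, if_pos (by simp [Fin.val_succ])]
  · intro m _ hm
    have hcond : ¬(((i.castSucc : Fin (k+1)) : ℕ)+1 = (m:ℕ)) := by
      simp only [Fin.coe_castSucc]
      intro hc
      exact hm (Fin.ext (by simp only [Fin.val_succ]; omega))
    rw [Matrix.of_apply, if_neg hcond, zero_mul]
  · intro hmem; exact absurd (Finset.mem_univ _) hmem

lemma L21_mul_last (M : Matrix (Fin (k+1)) (Fin (k+1)) SymF) (j : Fin (k+1)) :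
    ((Matrix.of fun a b : Fin (k+1) => if (a:ℕ)+1 = (b:ℕ) then half else 0) * M)
      (Fin.last k) j = 0 := by
  rw [Matrix.mul_apply]
  apply Finset.sum_eq_zero
  intro m _
  have hcond : ¬(((Fin.last k : Fin (k+1)) : ℕ)+1 = (m:ℕ)) := by
    simp only [Fin.val_last]
    have := m.isLt
    omega
  rw [Matrix.of_apply, if_neg hcond, zero_mul]

lemma Lm_mul_B5 : Lm k * B5 lam k = B3 lam k := by
  unfold Lm B5 B3
  rw [fromBlocks_multiply]
  simp only [Matrix.mul_zero, Matrix.zero_mul, Matrix.mul_one, Matrix.one_mul,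
    add_zero, zero_add]
  have hTL : diagonal (fun i : Fin (k+1) => if (i:ℕ) = 0 then (1:SymF) else half) *
      X2 lam k = FP lam k := by
    refine Matrix.ext fun i j => ?_
    rw [Matrix.diagonal_mul]
    unfold X2
    rw [Matrix.diagonal_mul]
    induction i using Fin.cases with
    | zero => simp [dX]
    | succ i' =>
      have h0 : ((i'.succ : Fin (k+1)) : ℕ) ≠ 0 := by simp
      simp only [h0, if_false, dX]
      rw [← mul_assoc, half_mul_two, one_mul]
  have hTR : diagonal (fun i : Fin (k+1) => if (i:ℕ) = 0 then (1:SymF) else half) *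
      Y2 lam k +
      (Matrix.of fun a b : Fin (k+1) => if (a:ℕ) = (b:ℕ)+1 then (-1:SymF) else 0) *
        Z2 lam k = GP lam k := by
    refine Matrix.ext fun i j => ?_
    rw [Matrix.add_apply, Matrix.diagonal_mul]
    induction i using Fin.cases with
    | zero =>
      rw [L12_mul_zero]
      simp [Y2, GP]
    | succ i' =>
      rw [L12_mul_succ]
      unfold Z2
      rw [Matrix.diagonal_mul]
      have h0 : ((i'.succ : Fin (k+1)) : ℕ) ≠ 0 := by simp
      have hik : (i' : ℕ) < k := i'.isLt
      rw [show Y2 lam k i'.succ j = 0 from by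
        simp only [Y2, Matrix.of_apply]; rw [if_neg h0], mul_zero, zero_add]
      simp only [dZ, Fin.coe_castSucc, hik, ite_true, if_true, GQ, GP, Gt,
        Matrix.of_apply, Fin.val_succ]
      ring
  have hBL : (Matrix.of fun a b : Fin (k+1) => if (a:ℕ)+1 = (b:ℕ) then half else 0) *
      X2 lam k = Clow lam k := by
    refine Matrix.ext fun i j => ?_
    induction i using Fin.lastCases with
    | last =>
      rw [L21_mul_last]
      simp [Clow]
    | cast i' =>
      rw [L21_mul_cast]
      unfold X2
      rw [Matrix.diagonal_mul]
      have h0 : ((i'.succ : Fin (k+1)) : ℕ) ≠ 0 := by simp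
      have hik : (i' : ℕ) < k := i'.isLt
      rw [show dX k i'.succ = 2 from by simp only [dX]; rw [if_neg h0]]
      rw [← mul_assoc, half_mul_two, one_mul]
      simp only [Clow, Matrix.of_apply, Fin.coe_castSucc, hik, ite_true, if_true,
        FQ, FP, Ft, Fin.val_succ]
  have hBR : (Matrix.of fun a b : Fin (k+1) => if (a:ℕ)+1 = (b:ℕ) then half else 0) *
      Y2 lam k + Z2 lam k = Z2 lam k := by
    have hz : (Matrix.of fun a b : Fin (k+1) => if (a:ℕ)+1 = (b:ℕ) then half else 0) *
        Y2 lam k = 0 := by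
      refine Matrix.ext fun i j => ?_
      induction i using Fin.lastCases with
      | last => rw [L21_mul_last]; simp
      | cast i' =>
        rw [L21_mul_cast]
        simp [Y2, Fin.val_succ]
    rw [hz, zero_add]
  rw [hTL, hTR, hBL, hBR]

lemma det_Lm : (Lm k).det = 1 := by
  unfold Lm
  rw [det_fromBlocks_one₂₂]
  have h12 : (Matrix.of fun a b : Fin (k+1) => if (a:ℕ) = (b:ℕ)+1 then (-1:SymF) else 0) *
      (Matrix.of fun a b : Fin (k+1) => if (a:ℕ)+1 = (b:ℕ) then half else 0) =
      Matrix.of (fun a b : Fin (k+1) =>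
        if (a:ℕ) = (b:ℕ) ∧ 1 ≤ (a:ℕ) then -half else 0) := by
    refine Matrix.ext fun i j => ?_
    induction i using Fin.cases with
    | zero =>
      rw [Matrix.mul_apply]
      rw [Finset.sum_eq_zero (fun m _ => by simp)]
      simp
    | succ i' =>
      rw [L12_mul_succ]
      simp only [Matrix.of_apply, Fin.coe_castSucc, Fin.val_succ]
      by_cases hij : (i' : ℕ) + 1 = (j : ℕ)
      · rw [if_pos hij, if_pos ⟨hij, by omega⟩]
      · rw [if_neg hij, if_neg (by omega), neg_zero]
  rw [h12]
  have hone : diagonal (fun i : Fin (k+1) => if (i:ℕ) = 0 then (1:SymF) else half) -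
      Matrix.of (fun a b : Fin (k+1) =>
        if (a:ℕ) = (b:ℕ) ∧ 1 ≤ (a:ℕ) then -half else 0) = 1 := by
    refine Matrix.ext fun i j => ?_
    rw [Matrix.sub_apply, Matrix.of_apply]
    by_cases hij : i = j
    · subst hij
      rw [Matrix.diagonal_apply_eq, Matrix.one_apply_eq]
      by_cases h0 : (i : ℕ) = 0
      · rw [if_pos h0, if_neg (by omega), sub_zero]
      · rw [if_neg h0, if_pos ⟨rfl, by omega⟩, sub_neg_eq_add, half_add_half]
    · have hvv : ¬((i:ℕ) = (j:ℕ) ∧ 1 ≤ (i:ℕ)) := by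
        intro hc
        exact hij (Fin.ext hc.1)
      rw [Matrix.diagonal_apply_ne _ hij, Matrix.one_apply_ne hij, if_neg hvv, sub_zero]
  rw [hone, det_one]

lemma det_B3 : (B3 lam k).det =
    ((2:SymF)^k * (FP lam k).det) * (((-1:SymF)^k * (-2)) * (GQ lam k).det) := by
  have h5 : (B3 lam k).det = (B5 lam k).det := by
    rw [← Lm_mul_B5 lam k, det_mul, det_Lm, one_mul]
  rw [h5]
  unfold B5
  rw [det_fromBlocks_zero₂₁]
  unfold X2 Z2
  rw [det_mul, det_mul, det_diagonal, det_diagonal]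
  have hdX : (∏ i : Fin (k+1), dX k i) = (2:SymF)^k := by
    rw [Fin.prod_univ_succ]
    simp [dX, Finset.prod_const, Fintype.card_fin]
  have hdZ : (∏ i : Fin (k+1), dZ k i) = (-1:SymF)^k * (-2) := by
    rw [Fin.prod_univ_castSucc]
    simp [dZ, Fin.coe_castSucc, Fin.is_lt, Fin.val_last, Finset.prod_const,
      Fintype.card_fin]
  rw [hdX, hdZ]

lemma detred (N m : ℕ) (hm : m ≤ N) (w : ℕ → ℤ) (hw : ∀ i, m ≤ i → w i = 0) :
    (Matrix.of fun i j : Fin N => hh (w i - i + j) - hh (w i - i - j - 1)).det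
    = (Matrix.of fun i j : Fin m => hh (w i - i + j) - hh (w i - i - j - 1)).det := by
  have hNm : m + (N - m) = N := by omega
  set e : (Fin m ⊕ Fin (N - m)) ≃ Fin N := finSumFinEquiv.trans (finCongr hNm) with he
  rw [← Matrix.det_submatrix_equiv_self e]
  have hblock :
      (Matrix.of fun i j : Fin N => hh (w i - i + j) - hh (w i - i - j - 1)).submatrix e e =
      fromBlocks (Matrix.of fun i j : Fin m => hh (w i - i + j) - hh (w i - i - j - 1))
        (Matrix.of fun (i : Fin m) (j : Fin (N-m)) =>
          hh (w i - i + (m + (j:ℕ) : ℕ)) - hh (w i - i - (m + (j:ℕ) : ℕ) - 1))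
        0
        (Matrix.of fun i j : Fin (N-m) => hh ((j : ℤ) - (i : ℤ))) := by
    refine Matrix.ext fun i j => ?_
    rcases i with i | i <;> rcases j with j | j <;>
      simp only [Matrix.submatrix_apply, he, Equiv.trans_apply, finCongr_apply,
        finSumFinEquiv_apply_left, finSumFinEquiv_apply_right, Fin.coe_cast,
        Fin.coe_castAdd, Fin.coe_natAdd, fromBlocks_apply₁₁, fromBlocks_apply₁₂,
        fromBlocks_apply₂₁, fromBlocks_apply₂₂, Matrix.of_apply, Matrix.zero_apply]
    · rw [hw (m + (i:ℕ)) (by omega)]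
      rw [hh_of_neg (by push_cast; omega), hh_of_neg (by push_cast; omega), sub_self]
    · rw [hw (m + (i:ℕ)) (by omega)]
      rw [show hh (0 - ((m + (i:ℕ) : ℕ) : ℤ) - ((m + (j:ℕ) : ℕ) : ℤ) - 1) = 0 from
        hh_of_neg (by push_cast; omega), sub_zero]
      congr 1
      push_cast
      ring
  rw [hblock, det_fromBlocks_zero₂₁]
  have hut : (Matrix.of fun i j : Fin (N-m) => hh ((j : ℤ) - (i : ℤ))).det = 1 := by
    rw [Matrix.det_of_upperTriangular (M := Matrix.of fun i j : Fin (N-m) =>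
      hh ((j : ℤ) - (i : ℤ))) ?ht]
    case ht =>
      intro i j hlt
      exact hh_of_neg (by
        have : (j : ℕ) < (i : ℕ) := hlt
        push_cast
        omega)
    apply Finset.prod_eq_one
    intro i _
    simp [hh_zero]
  rw [hut, mul_one]

lemma soU_eq : soU (fun i => if i < k + 1 then lam i + 1 else 0) = (FP lam k).det := by
  have hp : plen (fun i => if i < k + 1 then lam i + 1 else 0) = k + 1 := by
    have hmem : (k+1) ∈ {N | ∀ i, N ≤ i → (if i < k + 1 then lam i + 1 else 0) = 0} := by
      intro i hi
      rw [if_neg (by omega)]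
    have hub : ∀ N ∈ {N | ∀ i, N ≤ i → (if i < k + 1 then lam i + 1 else 0) = 0},
        k + 1 ≤ N := by
      intro N hN
      by_contra hc
      have := hN k (by omega)
      rw [if_pos (by omega)] at this
      omega
    exact le_antisymm (Nat.sInf_le hmem) (hub _ (Nat.sInf_mem ⟨_, hmem⟩))
  unfold soU
  rw [← Matrix.det_submatrix_equiv_self (finCongr hp.symm)]
  congr 1
  refine Matrix.ext fun i j => ?_
  have hi : (i : ℕ) < k + 1 := i.isLt
  simp only [Matrix.submatrix_apply, finCongr_apply, Matrix.of_apply, Fin.coe_cast,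
    FP, Ft, pI, hi, if_true]
  congr 1 <;> congr 1 <;> (push_cast; omega)

lemma soMinusU_eq :
    soMinusU (fun i => if i < k + 1 then lam (i + 1) else 0) = (GQ lam k).det := by
  set nu : ℕ → ℕ := fun i => if i < k + 1 then lam (i + 1) else 0 with hnu
  have hmem : (k+1) ∈ {N | ∀ i, N ≤ i → nu i = 0} := by
    intro i hi
    simp only [Set.mem_setOf_eq, hnu]
    rw [if_neg (by omega)]
  have hm_le : plen nu ≤ k + 1 := Nat.sInf_le hmem
  have hm0 : ∀ i, plen nu ≤ i → nu i = 0 := Nat.sInf_mem ⟨_, hmem⟩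
  have hGQ : GQ lam k = Matrix.of fun i j : Fin (k+1) =>
      hh ((nu i : ℤ) - (i : ℤ) + (j : ℤ)) - hh ((nu i : ℤ) - (i : ℤ) - (j : ℤ) - 1) := by
    refine Matrix.ext fun i j => ?_
    have hi : (i : ℕ) < k + 1 := i.isLt
    simp only [GQ, Gt, pI, Matrix.of_apply, hnu, hi, if_true]
    congr 1 <;> congr 1 <;> (push_cast; omega)
  rw [hGQ, detred (k+1) (plen nu) hm_le (fun i => (nu i : ℤ))
    (fun i hi => by show ((nu i : ℕ) : ℤ) = 0; rw [hm0 i hi]; rfl)]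
  unfold soMinusU
  congr 1

end Main

end ABaux

/-- **Theorem (Ayyer–Behrend; universal form).** For `λ` of length at most `n+1`,
`rs_{(λ₁+1,…,λ_n+1),(λ₂,…,λ_{n+1})} + rs_{(λ₁,…,λ_{n+1}),(λ₂+1,…,λ_n+1)}
  = so_{(λ₁+1,…,λ_n+1)} · so⁻_{(λ₂,…,λ_{n+1})}`. -/
theorem rs_sum_eq_so_mul_soMinus (n : ℕ) (hn : 0 < n) (lam : ℕ → ℕ)
    (hlam : IsPartition lam) (hlen : plen lam ≤ n + 1) :
    rsN n n (fun i => (lam i : ℤ) + 1) (fun i => (lam (i + 1) : ℤ)) +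
      rsN (n + 1) (n - 1) (fun i => (lam i : ℤ)) (fun i => (lam (i + 1) : ℤ) + 1) =
      soU (fun i => if i < n then lam i + 1 else 0) *
        soMinusU (fun i => if i < n then lam (i + 1) else 0) := by
  obtain ⟨k, rfl⟩ : ∃ k, n = k + 1 := ⟨n - 1, by omega⟩
  simp only [show k + 1 + 1 = k + 2 from rfl, show k + 1 - 1 = k from rfl]
  rw [ABaux.rs1_eq lam k, ABaux.rs2_eq lam k, ABaux.soU_eq lam k,
    ABaux.soMinusU_eq lam k]
  have hTne : (ABaux.T k).det ≠ 0 := by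
    rw [ABaux.det_T]
    exact pow_ne_zero _ (by norm_num)
  apply mul_right_cancel₀ hTne
  have h1 : (ABaux.M1 lam k).det * (ABaux.T k).det =
      (ABaux.B3 lam k).det + (ABaux.N2 lam k * ABaux.T k).det := by
    rw [← Matrix.det_mul]; exact ABaux.split_det lam k
  have h2 : (ABaux.M2 lam k).det * (ABaux.T k).det =
      -(ABaux.N2 lam k * ABaux.T k).det := by
    rw [ABaux.det_M2, Matrix.det_mul]; ring
  rw [add_mul, h1, h2, ABaux.det_B3, ABaux.det_T]
  simp only [show ((-2 : SymF)) = (-1) * 2 from by norm_num, mul_pow]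
  ring

end
end
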